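/- arXiv:2409.01261 — 3 statements merged into one kernel-verified Lean document; each statement's English description precedes it below -/
import Mathlib

section
/- For the Dyck shift on 2M symbols (M ≥ 2), the number of periodic points of period n whose first n symbols contain equally many opening and closing brackets is binom(n, n/2)·M^{n/2} when n is even, and 0 when n is odd. -/
/-- The alphabet of `M` bracket pairs: `Sum.inl k` is the opening bracket `α_k`,
`Sum.inr k` is the closing bracket `β_k`. -/
abbrev DyckSym (M : ℕ) := Fin M ⊕ Fin M

/-- One step of left-to-right reduction in the Dyck monoid with zero:
the accumulator is `none` (the zero element) or the reduced word so far. -/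
def dyckRedStep (M : ℕ) : Option (List (DyckSym M)) → DyckSym M → Option (List (DyckSym M))
  | none, _ => none
  | some l, Sum.inl k => some (l ++ [Sum.inl k])
  | some l, Sum.inr k =>
      match l.getLast? with
      | some (Sum.inl j) => if j = k then some l.dropLast else none
      | _ => some (l ++ [Sum.inr k])

/-- Reduction of a finite word in the Dyck monoid with zero; `none` represents `0`. -/
def dyckRed (M : ℕ) (w : List (DyckSym M)) : Option (List (DyckSym M)) :=
  w.foldl (dyckRedStep M) (some [])

/-- The finite subword `ω_j ⋯ ω_k` of a bi-infinite sequence. -/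
def dyckSubword (M : ℕ) (ω : ℤ → DyckSym M) (j k : ℤ) : List (DyckSym M) :=
  (List.range (k - j + 1).toNat).map fun i => ω (j + i)

/-- The Dyck shift on `2M` symbols. -/
def dyckShiftSet (M : ℕ) : Set (ℤ → DyckSym M) :=
  {ω | ∀ j k : ℤ, j < k → dyckRed M (dyckSubword M ω j k) ≠ none}

/-- The left shift map. -/
def dyckShiftMap (M : ℕ) (ω : ℤ → DyckSym M) : ℤ → DyckSym M := fun i => ω (i + 1)

/-- `H_n(ω)`: excess of opening over closing brackets among `ω_0 ⋯ ω_{n-1}`. -/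
def dyckH (M : ℕ) (n : ℕ) (ω : ℤ → DyckSym M) : ℤ :=
  ∑ j ∈ Finset.range n, (if (ω (j : ℤ)).isLeft then (1 : ℤ) else -1)

/-- Periodic points of period `n` of the Dyck shift. -/
def dyckPer (M n : ℕ) : Set (ℤ → DyckSym M) :=
  {ω | ω ∈ dyckShiftSet M ∧ (dyckShiftMap M)^[n] ω = ω}

/-- Period-`n` points with `H_n = 0`. -/
def dyckPer0 (M n : ℕ) : Set (ℤ → DyckSym M) :=
  {ω | ω ∈ dyckPer M n ∧ dyckH M n ω = 0}

namespace DyckAux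

variable {M : ℕ}

def eps (a : DyckSym M) : ℤ := if a.isLeft then 1 else -1

/-- Height function of a bi-infinite word. -/
noncomputable def hgt (ω : ℤ → DyckSym M) (t : ℤ) : ℤ :=
  (∑ i ∈ Finset.range (t ⊔ 0).toNat, eps (ω i)) -
    ∑ i ∈ Finset.range ((-t) ⊔ 0).toNat, eps (ω (-1 - i))

lemma hgt_zero (ω : ℤ → DyckSym M) : hgt ω 0 = 0 := by simp [hgt]

lemma hgt_step (ω : ℤ → DyckSym M) (t : ℤ) : hgt ω (t + 1) = hgt ω t + eps (ω t) := by
  rcases le_or_gt 0 t with h | h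
  · have h1 : (t + 1) ⊔ 0 = t + 1 := sup_eq_left.2 (by omega)
    have h2 : t ⊔ 0 = t := sup_eq_left.2 h
    have h3 : (-(t+1)) ⊔ 0 = 0 := sup_eq_right.2 (by omega)
    have h4 : (-t) ⊔ 0 = 0 := sup_eq_right.2 (by omega)
    have h5 : (t + 1).toNat = t.toNat + 1 := by omega
    rw [hgt, hgt, h1, h2, h3, h4, h5]
    simp [Finset.sum_range_succ, Int.toNat_of_nonneg h]
  · have h1 : (t + 1) ⊔ 0 = 0 := sup_eq_right.2 (by omega)
    have h2 : t ⊔ 0 = 0 := sup_eq_right.2 (by omega)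
    have h3 : (-t) ⊔ 0 = -t := sup_eq_left.2 (by omega)
    have h4 : (-(t+1)) ⊔ 0 = -(t+1) := sup_eq_left.2 (by omega)
    have h5 : (-t).toNat = (-(t+1)).toNat + 1 := by omega
    rw [hgt, hgt, h1, h2, h3, h4, h5, Finset.sum_range_succ]
    have h6 : ((-1 : ℤ) - ((-(t+1)).toNat : ℤ)) = t := by omega
    rw [h6]
    ring

lemma eps_cases (a : DyckSym M) : eps a = 1 ∨ eps a = -1 := by
  rcases a with a | a <;> simp [eps]

lemma hgt_step_left {ω : ℤ → DyckSym M} {t : ℤ} (h : (ω t).isLeft) :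
    hgt ω (t + 1) = hgt ω t + 1 := by rw [hgt_step]; simp [eps, h]

lemma hgt_step_right {ω : ℤ → DyckSym M} {t : ℤ} (h : (ω t).isRight) :
    hgt ω (t + 1) = hgt ω t - 1 := by
  have he : eps (ω t) = -1 := by
    rcases hv : ω t with a | a
    · rw [hv] at h; simp at h
    · simp [eps]
  rw [hgt_step, he]; ring

lemma isLeft_of_step {ω : ℤ → DyckSym M} {t : ℤ} (h : hgt ω t < hgt ω (t+1)) :
    (ω t).isLeft := by
  rcases hv : ω t with a | a
  · rfl
  · rw [hgt_step_right (by rw [hv]; rfl)] at h; omega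

/-- Discrete IVT going up. -/
lemma ivt_up (ω : ℤ → DyckSym M) {a b c : ℤ} (hab : a ≤ b)
    (h1 : hgt ω a ≤ c) (h2 : c ≤ hgt ω b) : ∃ t, a ≤ t ∧ t ≤ b ∧ hgt ω t = c := by
  obtain ⟨n, rfl⟩ : ∃ n : ℕ, b = a + n := ⟨(b - a).toNat, by omega⟩
  clear hab
  induction n generalizing a with
  | zero =>
    refine ⟨a, le_refl _, by simp, ?_⟩
    simp only [Nat.cast_zero, add_zero] at h2
    omega
  | succ n ih =>
    rcases eq_or_lt_of_le h1 with he | hlt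
    · exact ⟨a, le_refl _, by omega, he⟩
    · have hs : hgt ω (a + 1) ≤ c := by
        rcases eps_cases (ω a) with h | h <;> rw [hgt_step, h] at * <;> omega
      have h2' : c ≤ hgt ω (a + 1 + n) := by
        have : a + 1 + (n : ℤ) = a + (n + 1 : ℕ) := by push_cast; ring
        rwa [this]
      obtain ⟨t, ht1, ht2, ht3⟩ := ih hs h2'
      exact ⟨t, by omega, by push_cast at ht2 ⊢; omega, ht3⟩

/-- `q` is the matching opener position for `p`. -/
def isMatch (ω : ℤ → DyckSym M) (q p : ℤ) : Prop :=
  q < p ∧ hgt ω q = hgt ω (p + 1) ∧ ∀ i, q < i → i < p → hgt ω i ≠ hgt ω (p + 1)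


-- real content starts here

lemma hgt_step_bound (ω : ℤ → DyckSym M) (t : ℤ) :
    hgt ω (t+1) = hgt ω t + 1 ∨ hgt ω (t+1) = hgt ω t - 1 := by
  rcases hv : ω t with a | a
  · exact Or.inl (hgt_step_left (by rw [hv]; rfl))
  · exact Or.inr (hgt_step_right (by rw [hv]; rfl))

lemma match_unique {ω : ℤ → DyckSym M} {q q' p : ℤ}
    (h1 : isMatch ω q p) (h2 : isMatch ω q' p) : q = q' := by
  by_contra hne
  rcases lt_or_gt_of_ne hne with h | h
  · exact h1.2.2 q' h h2.1 h2.2.1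
  · exact h2.2.2 q h h1.1 h1.2.1

/-- An opener that stays strictly below all later heights up to time `t`. -/
def alive (ω : ℤ → DyckSym M) (i t : ℤ) : Prop :=
  ∀ s, i < s → s ≤ t → hgt ω i < hgt ω s

/-- A closer with no matching height in the window starting at `j`. -/
def dead (ω : ℤ → DyckSym M) (j i : ℤ) : Prop :=
  ∀ q, j ≤ q → q < i → hgt ω q ≠ hgt ω (i + 1)

lemma L1 {ω : ℤ → DyckSym M} {j q i t : ℤ} (hjq : j ≤ q) (hqi : q < i) (hit : i + 1 ≤ t)
    (hop : (ω q).isLeft) (hal : alive ω q t) (hcl : (ω i).isRight) : ¬ dead ω j i := by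
  intro hd
  have h1 : hgt ω q < hgt ω i := hal i hqi (by omega)
  have h2 : hgt ω (i+1) = hgt ω i - 1 := hgt_step_right hcl
  obtain ⟨t0, ht0a, ht0b, ht0c⟩ := ivt_up ω (le_of_lt hqi)
    (by omega : hgt ω q ≤ hgt ω (i+1)) (by omega : hgt ω (i+1) ≤ hgt ω i)
  have ht0i : t0 ≠ i := by intro h; rw [h] at ht0c; omega
  exact hd t0 (le_trans hjq ht0a) (lt_of_le_of_ne ht0b ht0i) ht0c

lemma L2 {ω : ℤ → DyckSym M} {j q' t : ℤ} (hjq : j ≤ q') (hq't : q' < t)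
    (hop : (ω q').isLeft) (hal : alive ω q' t)
    (hmax : ∀ i, q' < i → i < t → ¬((ω i).isLeft ∧ alive ω i t)) :
    hgt ω t = hgt ω q' + 1 := by
  have hgt_t : hgt ω q' < hgt ω t := hal t hq't le_rfl
  by_contra hne
  have hgt2 : hgt ω q' + 1 < hgt ω t := by omega
  -- greatest s* in [q'+1, t] with height hgt q' + 1
  obtain ⟨s, hs, hsmax⟩ := Int.exists_greatest_of_bdd
    (P := fun s => q' + 1 ≤ s ∧ s ≤ t ∧ hgt ω s = hgt ω q' + 1)
    ⟨t, fun z hz => hz.2.1⟩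
    ⟨q' + 1, le_rfl, by omega, hgt_step_left hop⟩
  obtain ⟨hs1, hs2, hs3⟩ := hs
  have hst : s < t := by
    rcases eq_or_lt_of_le hs2 with h | h
    · rw [h] at hs3; omega
    · exact h
  have habove : ∀ u, s < u → u ≤ t → hgt ω s < hgt ω u := by
    intro u hu1 hu2
    have h1 : hgt ω q' < hgt ω u := hal u (by omega) hu2
    have h2 : hgt ω u ≠ hgt ω q' + 1 := by
      intro h
      have := hsmax u ⟨by omega, hu2, h⟩
      omega
    omega
  have hsop : (ω s).isLeft := isLeft_of_step (habove (s+1) (by omega) (by omega))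
  exact hmax s (by omega) hst ⟨hsop, fun u hu1 hu2 => habove u hu1 hu2⟩

lemma L3 {ω : ℤ → DyckSym M} {j t : ℤ}
    (hnone : ∀ i, j ≤ i → i < t → ¬((ω i).isLeft ∧ alive ω i t))
    (hcl : (ω t).isRight) {q : ℤ} (hq : j ≤ q) : ¬ isMatch ω q t := by
  intro hm
  obtain ⟨hqt, hh, hmax⟩ := hm
  have hstep : hgt ω (t+1) = hgt ω t - 1 := hgt_step_right hcl
  have halq : alive ω q t := by
    intro s hs1 hs2
    rcases eq_or_lt_of_le hs2 with rfl | hst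
    · omega
    · by_contra hle
      push_neg at hle
      obtain ⟨t0, ht0a, ht0b, ht0c⟩ := ivt_up ω (le_of_lt hst)
        (by omega : hgt ω s ≤ hgt ω q) (by omega : hgt ω q ≤ hgt ω t)
      have : t0 ≠ t := by intro h; rw [h] at ht0c; omega
      exact hmax t0 (by omega) (by omega) (by omega)
  have hopq : (ω q).isLeft := by
    apply isLeft_of_step
    have := halq (q+1) (by omega) (by omega)
    exact this
  exact hnone q hq hqt ⟨hopq, halq⟩

lemma A3 {ω : ℤ → DyckSym M} {j q' t : ℤ} (hjq : j ≤ q') (hq't : q' < t)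
    (hop : (ω q').isLeft) (hal : alive ω q' t)
    (hmax : ∀ i, q' < i → i < t → ¬((ω i).isLeft ∧ alive ω i t))
    (hcl : (ω t).isRight) : isMatch ω q' t := by
  have h1 := L2 hjq hq't hop hal hmax
  have h2 : hgt ω (t+1) = hgt ω t - 1 := hgt_step_right hcl
  refine ⟨hq't, by omega, fun i hi1 hi2 h => ?_⟩
  have := hal i hi1 (by omega)
  omega

/-- If some height in `[j, t)` equals `hgt (t+1)`, then `t` has a match `≥ j`. -/
lemma exists_match_of_wit {ω : ℤ → DyckSym M} {j t q0 : ℤ} (hq0 : j ≤ q0) (hq0t : q0 < t)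
    (hh : hgt ω q0 = hgt ω (t+1)) : ∃ q, j ≤ q ∧ isMatch ω q t := by
  obtain ⟨q, hq, hqmax⟩ := Int.exists_greatest_of_bdd
    (P := fun q => q0 ≤ q ∧ q < t ∧ hgt ω q = hgt ω (t+1))
    ⟨t, fun z hz => le_of_lt hz.2.1⟩ ⟨q0, le_rfl, hq0t, hh⟩
  refine ⟨q, by omega, hq.2.1, hq.2.2, fun i hi1 hi2 h => ?_⟩
  have := hqmax i ⟨by omega, hi2, h⟩
  omega


section FilterRange

lemma filter_range_trunc (Q : ℕ → Bool) {r k : ℕ} (h : r ≤ k)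
    (h2 : ∀ i, r ≤ i → i < k → Q i = false) :
    (List.range k).filter Q = (List.range r).filter Q := by
  obtain ⟨m, rfl⟩ : ∃ m, k = r + m := ⟨k - r, by omega⟩
  rw [List.range_add, List.filter_append]
  have hnil : (((List.range m).map (r + ·)).filter Q) = [] := by
    rw [List.filter_eq_nil_iff]
    intro a ha
    obtain ⟨i, hi, rfl⟩ := List.mem_map.1 ha
    simp only [List.mem_range] at hi
    simp [h2 (r + i) (by omega) (by omega)]
  rw [hnil, List.append_nil]

lemma filter_range_split (Q : ℕ → Bool) {r k : ℕ} (h : r < k) (hr : Q r = true)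
    (h2 : ∀ i, r < i → i < k → Q i = false) :
    (List.range k).filter Q = (List.range r).filter Q ++ [r] := by
  rw [filter_range_trunc Q (show r + 1 ≤ k by omega) (fun i hi1 hi2 => h2 i (by omega) hi2)]
  rw [List.range_succ, List.filter_append]
  simp [hr]

end FilterRange

section Fold

variable {ω : ℤ → DyckSym M} {j : ℤ}

lemma bool_eq_of_iff {a b : Bool} (h : a = true ↔ b = true) : a = b := by
  cases a <;> cases b <;> simp_all

open Classical in
/-- Whether position `i` of the window `[j, j+k)` is on the stack after processing
the window. -/
noncomputable def inStk (ω : ℤ → DyckSym M) (j : ℤ) (k : ℕ) (i : ℕ) : Bool :=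
  decide (((ω (j + i)).isLeft ∧ alive ω (j + i) (j + k)) ∨
    ((ω (j + i)).isRight ∧ dead ω j (j + i)))

lemma inStk_iff {ω : ℤ → DyckSym M} {j : ℤ} {k i : ℕ} :
    inStk ω j k i = true ↔ (((ω (j + i)).isLeft ∧ alive ω (j + i) (j + k)) ∨
      ((ω (j + i)).isRight ∧ dead ω j (j + i))) := by
  simp [inStk]

noncomputable def stk (ω : ℤ → DyckSym M) (j : ℤ) (k : ℕ) : List ℕ :=
  (List.range k).filter (inStk ω j k)

def win (ω : ℤ → DyckSym M) (j : ℤ) (k : ℕ) : List (DyckSym M) :=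
  (List.range k).map fun i => ω (j + i)

/-- All in-window matched pairs up to time `j+k` are well-colored. -/
def Good (ω : ℤ → DyckSym M) (j : ℤ) (k : ℕ) : Prop :=
  ∀ p q (a : Fin M), j ≤ q → p < j + k → isMatch ω q p → ω p = Sum.inr a → ω q = Sum.inl a

lemma Good_mono {k : ℕ} (h : Good ω j (k+1)) : Good ω j k :=
  fun p q a hq hp hm hr => h p q a hq (by omega) hm hr

lemma win_succ (ω : ℤ → DyckSym M) (j : ℤ) (k : ℕ) :
    win ω j (k+1) = win ω j k ++ [ω (j + k)] := by
  simp [win, List.range_succ]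

lemma cast_succ (j : ℤ) (k : ℕ) : (j + ((k+1 : ℕ) : ℤ)) = (j + k) + 1 := by push_cast; ring

lemma inStk_step {k i : ℕ} (hik : i < k)
    (hup : (ω (j+i)).isLeft → alive ω (j+i) (j+k) → hgt ω (j+i) < hgt ω ((j+k)+1)) :
    inStk ω j (k+1) i = inStk ω j k i := by
  apply bool_eq_of_iff
  rw [inStk_iff, inStk_iff, cast_succ]
  constructor
  · rintro (⟨hl, hal⟩ | hc)
    · exact Or.inl ⟨hl, fun s h1 h2 => hal s h1 (by omega)⟩
    · exact Or.inr hc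
  · rintro (⟨hl, hal⟩ | hc)
    · refine Or.inl ⟨hl, fun s h1 h2 => ?_⟩
      rcases eq_or_lt_of_le h2 with rfl | h3
      · exact hup hl hal
      · exact hal s h1 (by omega)
    · exact Or.inr hc

lemma stk_succ_push {k : ℕ} (hcongr : ∀ i ∈ List.range k, inStk ω j (k+1) i = inStk ω j k i)
    (hQk : inStk ω j (k+1) k = true) : stk ω j (k+1) = stk ω j k ++ [k] := by
  unfold stk
  rw [List.range_succ, List.filter_append, List.filter_congr hcongr]
  simp [hQk]

lemma dyckRedStep_pop (l : List (DyckSym M)) (b : Fin M) :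
    dyckRedStep M (some (l ++ [Sum.inl b])) (Sum.inr b) = some l := by
  simp [dyckRedStep, List.getLast?_concat]

lemma dyckRedStep_fail (l : List (DyckSym M)) {b c : Fin M} (h : b ≠ c) :
    dyckRedStep M (some (l ++ [Sum.inl b])) (Sum.inr c) = none := by
  simp [dyckRedStep, List.getLast?_concat, h]

lemma dyckRedStep_push (l : List (DyckSym M)) (c : Fin M)
    (h : l.getLast? = none ∨ ∃ d, l.getLast? = some (Sum.inr d)) :
    dyckRedStep M (some l) (Sum.inr c) = some (l ++ [Sum.inr c]) := by
  rcases h with h | ⟨d, h⟩ <;> simp [dyckRedStep, h]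

open Classical in
theorem fold_eq (ω : ℤ → DyckSym M) (j : ℤ) (k : ℕ) :
    List.foldl (dyckRedStep M) (some []) (win ω j k) =
      if Good ω j k then some ((stk ω j k).map fun i : ℕ => ω (j + (i:ℤ))) else none := by
  induction k with
  | zero =>
    have hg : Good ω j 0 := by
      intro p q a hq hp hm hr
      have := hm.1
      omega
    rw [if_pos hg]
    simp [win, stk]
  | succ k ih =>
    have htk : (j + ((k+1:ℕ):ℤ)) = (j + k) + 1 := cast_succ j k
    rw [win_succ, List.foldl_append, ih]
    by_cases hG : Good ω j k
    case neg =>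
      rw [if_neg hG, if_neg (fun h => hG (Good_mono h))]
      rcases ω (j + k) with a | a <;> rfl
    case pos =>
      rw [if_pos hG]
      rcases hsym : ω ((j : ℤ) + (k : ℕ)) with a | c
      · -- opener
        have hopk : (ω (j + (k:ℕ))).isLeft := by rw [hsym]; rfl
        have hstep : hgt ω ((j+k)+1) = hgt ω (j+k) + 1 := hgt_step_left hopk
        have hGs : Good ω j (k+1) := by
          intro p q b hq hp hm hr
          rcases lt_or_ge p (j + k) with h | h
          · exact hG p q b hq h hm hr
          · exfalso
            have hpt : p = j + k := by omega
            rw [hpt, hsym] at hr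
            simp at hr
        rw [if_pos hGs]
        have hcongr : ∀ i ∈ List.range k, inStk ω j (k+1) i = inStk ω j k i := by
          intro i hi
          simp only [List.mem_range] at hi
          refine inStk_step hi (fun hl hal => ?_)
          have := hal (j + k) (by push_cast; omega) le_rfl
          omega
        have hQk : inStk ω j (k+1) k = true := by
          rw [inStk_iff]
          refine Or.inl ⟨hopk, fun s h1 h2 => ?_⟩
          rw [cast_succ] at h2
          have hs : s = (j + k) + 1 := by omega
          rw [hs, hstep]
          omega
        rw [stk_succ_push hcongr hQk, List.map_append, List.map_singleton, hsym]
        rfl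
      · -- closer
        have hclt : (ω (j + (k:ℕ))).isRight := by rw [hsym]; rfl
        have hstepd : hgt ω ((j+k)+1) = hgt ω (j+k) - 1 := hgt_step_right hclt
        by_cases hex : ∃ i : ℤ, (j ≤ i ∧ i < j + k) ∧ ((ω i).isLeft ∧ alive ω i (j + k))
        · -- Case A : there is a live opener; find the greatest one
          obtain ⟨q', ⟨⟨hjq', hq't⟩, hop', hal'⟩, hq'max⟩ :=
            Int.exists_greatest_of_bdd
              (P := fun z => (j ≤ z ∧ z < j + k) ∧ ((ω z).isLeft ∧ alive ω z (j + k)))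
              ⟨j + k, fun z hz => le_of_lt hz.1.2⟩ hex
          have hmaxno : ∀ i, q' < i → i < j + k → ¬((ω i).isLeft ∧ alive ω i (j + k)) := by
            intro i h1 h2 hc
            have := hq'max i ⟨⟨by omega, h2⟩, hc⟩
            omega
          have hht : hgt ω (j + k) = hgt ω q' + 1 := L2 hjq' hq't hop' hal' hmaxno
          have hmatch : isMatch ω q' (j + k) := A3 hjq' hq't hop' hal' hmaxno hclt
          have hjr' : (j : ℤ) + (((q' - j).toNat : ℕ) : ℤ) = q' := by omega
          set r' : ℕ := (q' - j).toNat with hr'def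
          have hr'k : r' < k := by omega
          have hQr' : inStk ω j k r' = true := by
            rw [inStk_iff, hjr']
            exact Or.inl ⟨hop', hal'⟩
          have habove : ∀ i, r' < i → i < k → inStk ω j k i = false := by
            intro i h1 h2
            rw [← Bool.not_eq_true, inStk_iff]
            have hq'i : q' < j + i := by omega
            rintro (⟨hl, hal⟩ | ⟨hc, hd⟩)
            · exact hmaxno (j + i) hq'i (by omega) ⟨hl, hal⟩
            · exact L1 hjq' hq'i (by omega) hop' hal' hc hd
          have hsplit : stk ω j k = (List.range r').filter (inStk ω j k) ++ [r'] :=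
            filter_range_split _ hr'k hQr' habove
          obtain ⟨b, hb⟩ : ∃ b, ω q' = Sum.inl b := Sum.isLeft_iff.1 hop'
          have hmapr : ω (j + ((r' : ℕ) : ℤ)) = Sum.inl b := by rw [hjr']; exact hb
          rw [hsplit, List.map_append]
          have hlast : ((List.map (fun (i:ℕ) => ω (j + (i:ℤ))) ((List.range r').filter (inStk ω j k)))
              ++ List.map (fun (i:ℕ) => ω (j + (i:ℤ))) [r']).getLast? = some (Sum.inl b) := by
            rw [List.map_singleton, hmapr]
            exact List.getLast?_concat
          -- height at the new top
          have hnotal : ¬ alive ω q' ((j+k)+1) := by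
            intro h
            have := h ((j+k)+1) (by omega) le_rfl
            omega
          by_cases hbc : b = c
          · -- colors match: pop
            subst hbc
            have hGs : Good ω j (k+1) := by
              intro p q a hq hp hm hr
              rcases lt_or_ge p (j + k) with h | h
              · exact hG p q a hq h hm hr
              · have hpt : p = j + k := by omega
                subst hpt
                have hqq' : q = q' := match_unique hm hmatch
                rw [hsym] at hr
                have hac : a = b := by
                  have := Sum.inr.inj hr
                  exact this.symm
                rw [hqq', hac, hb]
            rw [if_pos hGs]
            have hstknew : stk ω j (k+1) = (List.range r').filter (inStk ω j k) := by
              unfold stk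
              have htrunc : ∀ i, r' ≤ i → i < k + 1 → inStk ω j (k+1) i = false := by
                intro i h1 h2
                rw [← Bool.not_eq_true, inStk_iff, cast_succ]
                rintro (⟨hl, hal⟩ | ⟨hc, hd⟩)
                · -- opener alive at time t+1
                  rcases eq_or_lt_of_le h1 with rfl | h1'
                  · rw [hjr'] at hal
                    exact hnotal hal
                  · rcases lt_or_ge i k with hik | hik
                    · have : inStk ω j k i = true := by
                        rw [inStk_iff]
                        exact Or.inl ⟨hl, fun s hs1 hs2 => hal s hs1 (by omega)⟩
                      rw [habove i h1' hik] at this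
                      exact absurd this (by simp)
                    · have hik' : i = k := by omega
                      subst hik'
                      rw [hsym] at hl
                      simp at hl
                · -- closer dead at position j+i
                  rcases lt_or_ge i k with hik | hik
                  · have : inStk ω j k i = true := by
                      rw [inStk_iff]
                      exact Or.inr ⟨hc, hd⟩
                    rcases eq_or_lt_of_le h1 with rfl | h1'
                    · rw [hQr'] at this
                      rw [inStk_iff, hjr'] at hQr'
                      rcases hQr' with ⟨hl2, _⟩ | ⟨hc2, _⟩
                      · rw [hjr'] at hc
                        exact absurd hc (by simp [Sum.not_isRight.2 hl2])
                      · rw [hjr'] at hc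
                        exact absurd hb (by rcases Sum.isRight_iff.1 hc2 with ⟨y, hy⟩; rw [hy]; simp)
                    · rw [habove i h1' hik] at this
                      exact absurd this (by simp)
                  · have hik' : i = k := by omega
                    subst hik'
                    exact hd q' hjq' hq't hmatch.2.1
              rw [filter_range_trunc _ (by omega : r' ≤ k + 1) htrunc]
              apply List.filter_congr
              intro i hi
              simp only [List.mem_range] at hi
              apply inStk_step (by omega)
              intro hl hal
              have h1 : hgt ω (j + i) < hgt ω q' := hal q' (by omega) (by omega)
              omega
            rw [hstknew]
            simp only [List.foldl_cons, List.foldl_nil, List.map_singleton, hmapr]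
            rw [dyckRedStep_pop]
          · -- colors mismatch: die
            have hnGs : ¬ Good ω j (k+1) := by
              intro h
              have h2 := h (j + k) q' c hjq' (by omega) hmatch hsym
              rw [hb] at h2
              exact hbc (Sum.inl.inj h2)
            rw [if_neg hnGs]
            simp only [List.foldl_cons, List.foldl_nil, List.map_singleton, hmapr]
            rw [dyckRedStep_fail _ hbc]
        · -- Case B: no live opener
          have hnone : ∀ i, j ≤ i → i < j + k → ¬((ω i).isLeft ∧ alive ω i (j+k)) := by
            intro i h1 h2 hc
            exact hex ⟨i, ⟨h1, h2⟩, hc⟩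
          have hnom : ∀ q, j ≤ q → ¬ isMatch ω q (j + k) := fun q hq => L3 hnone hclt hq
          have hGs : Good ω j (k+1) := by
            intro p q a hq hp hm hr
            rcases lt_or_ge p (j + k) with h | h
            · exact hG p q a hq h hm hr
            · have hpt : p = j + k := by omega
              subst hpt
              exact absurd hm (hnom q hq)
          rw [if_pos hGs]
          have hdead : dead ω j (j + k) := by
            intro q hq1 hq2 hh
            obtain ⟨qm, hqm1, hqm2⟩ := exists_match_of_wit hq1 hq2 hh
            exact hnom qm hqm1 hqm2
          have hQk : inStk ω j (k+1) k = true := by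
            rw [inStk_iff]
            exact Or.inr ⟨hclt, hdead⟩
          have hcongr : ∀ i ∈ List.range k, inStk ω j (k+1) i = inStk ω j k i := by
            intro i hi
            simp only [List.mem_range] at hi
            refine inStk_step hi (fun hl hal => ?_)
            exact absurd ⟨hl, hal⟩ (hnone (j+i) (by omega) (by push_cast; omega))
          rw [stk_succ_push hcongr hQk, List.map_append, List.map_singleton, hsym]
          simp only [List.foldl_cons, List.foldl_nil]
          apply dyckRedStep_push
          rcases hl : (List.map (fun i : ℕ => ω (j + (i:ℤ))) (stk ω j k)).getLast? with _ | x
          · exact Or.inl rfl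
          · right
            have hxmem := List.mem_of_getLast? hl
            obtain ⟨i, hi, rfl⟩ := List.mem_map.1 hxmem
            have hi2 := List.mem_filter.1 hi
            have hir : (ω (j + (i:ℤ))).isRight := by
              rcases inStk_iff.1 hi2.2 with ⟨hlft, hal⟩ | ⟨hr, _⟩
              · exact absurd ⟨hlft, hal⟩
                  (hnone (j+i) (by omega) (by have := List.mem_range.1 hi2.1; push_cast; omega))
              · exact hr
            obtain ⟨d, hd⟩ := Sum.isRight_iff.1 hir
            exact ⟨d, by rw [hd]⟩

end Fold


section Charac

open Classical in
theorem shiftSet_iff (ω : ℤ → DyckSym M) :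
    ω ∈ dyckShiftSet M ↔
      ∀ p q (a : Fin M), isMatch ω q p → ω p = Sum.inr a → ω q = Sum.inl a := by
  constructor
  · intro hω p q a hm hr
    have hqp : q < p := hm.1
    have hred := hω q p hqp
    have hwin : dyckSubword M ω q p = win ω q (p - q + 1).toNat := rfl
    rw [dyckRed, hwin, fold_eq] at hred
    by_cases hGood : Good ω q (p - q + 1).toNat
    · exact hGood p q a le_rfl (by omega) hm hr
    · rw [if_neg hGood] at hred
      exact absurd rfl hred
  · intro h j k hjk
    have hwin : dyckSubword M ω j k = win ω j (k - j + 1).toNat := rfl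
    rw [dyckRed, hwin, fold_eq]
    have hg : Good ω j (k - j + 1).toNat := fun p q a _ _ hm hr => h p q a hm hr
    rw [if_pos hg]
    simp

end Charac

section Periodic

variable {n : ℕ} {ω : ℤ → DyckSym M}

lemma iterate_shift (ω : ℤ → DyckSym M) (n : ℕ) :
    (dyckShiftMap M)^[n] ω = fun i => ω (i + n) := by
  induction n with
  | zero => simp
  | succ k ih =>
    rw [Function.iterate_succ_apply', ih]
    funext i
    show (fun i => ω (i + k)) (i + 1) = _
    push_cast
    ring_nf

lemma per_iff : (dyckShiftMap M)^[n] ω = ω ↔ ∀ t, ω (t + n) = ω t := by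
  rw [iterate_shift]
  constructor
  · intro h t; exact congrFun h t
  · intro h; funext t; exact h t

lemma hgt_n (ω : ℤ → DyckSym M) (n : ℕ) : hgt ω n = dyckH M n ω := by
  have h1 : ((n : ℤ) ⊔ 0) = n := sup_eq_left.2 (by positivity)
  have h2 : ((-(n:ℤ)) ⊔ 0) = 0 := sup_eq_right.2 (by omega)
  rw [hgt, h1, h2]
  simp [dyckH, eps]

variable (hper : ∀ t, ω (t + n) = ω t)

include hper in
lemma per_mul : ∀ (c : ℤ) (t : ℤ), ω (t + c * n) = ω t := by
  intro c
  induction c using Int.induction_on with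
  | zero => simp
  | succ c ih =>
    intro t
    have : t + (c + 1 : ℤ) * n = (t + c * n) + n := by ring
    rw [this, hper, ih]
  | pred c ih =>
    intro t
    have h := hper (t + (-c - 1 : ℤ) * n)
    have h2 : t + (-c - 1 : ℤ) * n + n = t + (-c : ℤ) * n := by ring
    rw [h2] at h
    rw [← h, ih]

include hper in
lemma hgt_per (hbal : dyckH M n ω = 0) : ∀ t, hgt ω (t + n) = hgt ω t := by
  have key : ∀ t : ℤ, hgt ω (t + n) = hgt ω t + hgt ω n := by
    intro t
    induction t using Int.induction_on with
    | zero => simp [hgt_zero]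
    | succ c ih =>
      have e1 : ((c : ℤ) + 1 + n) = (c + n) + 1 := by ring
      rw [e1, hgt_step, ih, hper, hgt_step]
      ring
    | pred c ih =>
      have e1 : (-(c:ℤ) - 1 + n) + 1 = -(c:ℤ) + n := by ring
      have e2 : (-(c:ℤ) - 1) + 1 = -(c:ℤ) := by ring
      have s1 := hgt_step ω (-(c:ℤ) - 1 + n)
      have s2 := hgt_step ω (-(c:ℤ) - 1)
      rw [e1] at s1
      rw [e2] at s2
      rw [hper] at s1
      omega
  intro t
  rw [key, hgt_n, hbal]
  ring

include hper in
lemma hgt_per_mul (hbal : dyckH M n ω = 0) : ∀ (c t : ℤ), hgt ω (t + c * n) = hgt ω t := by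
  intro c
  induction c using Int.induction_on with
  | zero => simp
  | succ c ih =>
    intro t
    have : t + (c + 1 : ℤ) * n = (t + c * n) + n := by ring
    rw [this, hgt_per hper hbal, ih]
  | pred c ih =>
    intro t
    have h := hgt_per hper hbal (t + (-c - 1 : ℤ) * n)
    have h2 : t + (-c - 1 : ℤ) * n + n = t + (-c : ℤ) * n := by ring
    rw [h2] at h
    rw [← h, ih]

include hper in
lemma isMatch_shift (hbal : dyckH M n ω = 0) (c : ℤ) {q p : ℤ} (hm : isMatch ω q p) :
    isMatch ω (q + c * n) (p + c * n) := by
  obtain ⟨h1, h2, h3⟩ := hm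
  refine ⟨by omega, ?_, ?_⟩
  · have e : p + c * n + 1 = (p + 1) + c * n := by ring
    rw [e, hgt_per_mul hper hbal, hgt_per_mul hper hbal, h2]
  · intro i hi1 hi2 hh
    have e : p + c * n + 1 = (p + 1) + c * n := by ring
    rw [e, hgt_per_mul hper hbal] at hh
    have e2 : i = (i - c * n) + c * n := by ring
    rw [e2, hgt_per_mul hper hbal] at hh
    exact h3 (i - c * n) (by omega) (by omega) hh

lemma isLeft_of_isMatch {q p : ℤ} (hm : isMatch ω q p) (hp : (ω p).isRight) :
    (ω q).isLeft := by
  obtain ⟨h1, h2, h3⟩ := hm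
  have hstep : hgt ω (p + 1) = hgt ω p - 1 := hgt_step_right hp
  rcases eq_or_lt_of_le (by omega : q + 1 ≤ p) with he | hlt
  · apply isLeft_of_step
    rw [he, h2]
    omega
  · apply isLeft_of_step
    have hne : hgt ω (q+1) ≠ hgt ω (p+1) := h3 (q+1) (by omega) (by omega)
    rcases hgt_step_bound ω q with h | h
    · omega
    · exfalso
      obtain ⟨t0, ht0a, ht0b, ht0c⟩ := ivt_up ω (by omega : q + 1 ≤ p)
        (by omega : hgt ω (q+1) ≤ hgt ω (p+1)) (by omega : hgt ω (p+1) ≤ hgt ω p)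
      have : t0 ≠ p := by intro hx; rw [hx] at ht0c; omega
      exact h3 t0 (by omega) (by omega) ht0c

include hper in
lemma exists_isMatch (hn2 : 2 ≤ n) (hbal : dyckH M n ω = 0) (p : ℤ) (hp : (ω p).isRight) :
    ∃ q, isMatch ω q p ∧ (ω q).isLeft := by
  have hwit : hgt ω (p + 1 - n) = hgt ω (p + 1) := by
    have := hgt_per hper hbal (p + 1 - n)
    rw [show p + 1 - (n:ℤ) + n = p + 1 by ring] at this
    omega
  obtain ⟨q, _, hm⟩ := exists_match_of_wit (j := p + 1 - n) le_rfl
    (by omega : p + 1 - (n:ℤ) < p) hwit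
  exact ⟨q, hm, isLeft_of_isMatch hm hp⟩

end Periodic


section Recon

/-- Residue of an integer position in `Fin n`. -/
def res (n : ℕ) (hn : 0 < n) (q : ℤ) : Fin n :=
  ⟨(q % (n:ℤ)).toNat, by
    have hne : (n:ℤ) ≠ 0 := by exact_mod_cast hn.ne'
    have h1 : 0 ≤ q % (n:ℤ) := Int.emod_nonneg q hne
    have h2 : q % (n:ℤ) < n := Int.emod_lt_of_pos q (by exact_mod_cast hn)
    omega⟩

/-- Periodic extension of a word of length `n`. -/
def extw (n : ℕ) (hn : 0 < n) (w : Fin n → DyckSym M) : ℤ → DyckSym M :=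
  fun t => w (res n hn t)

lemma res_congr {n : ℕ} (hn : 0 < n) {q q' : ℤ} (h : q % (n:ℤ) = q' % (n:ℤ)) :
    res n hn q = res n hn q' := by
  apply Fin.ext
  simp only [res]
  omega

lemma res_coe {n : ℕ} (hn : 0 < n) (i : Fin n) : res n hn ((i : ℕ) : ℤ) = i := by
  apply Fin.ext
  simp only [res]
  have h1 : ((i : ℕ) : ℤ) % (n:ℤ) = (i : ℕ) :=
    Int.emod_eq_of_lt (by positivity) (by exact_mod_cast i.isLt)
  omega

lemma extw_coe {n : ℕ} (hn : 0 < n) (w : Fin n → DyckSym M) (i : Fin n) :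
    extw n hn w ((i : ℕ) : ℤ) = w i := by
  unfold extw
  rw [res_coe]

lemma extw_per {n : ℕ} (hn : 0 < n) (w : Fin n → DyckSym M) :
    ∀ t, extw n hn w (t + n) = extw n hn w t := by
  intro t
  unfold extw
  rw [res_congr hn (by rw [show t + (n:ℤ) = t + 1 * n by ring, Int.add_mul_emod_self_right] :
    (t + (n:ℤ)) % (n:ℤ) = t % (n:ℤ))]

lemma hgt_congr {ω₁ ω₂ : ℤ → DyckSym M} (h : ∀ t, (ω₁ t).isLeft = (ω₂ t).isLeft) :
    hgt ω₁ = hgt ω₂ := by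
  funext t
  unfold hgt
  congr 1
  · exact Finset.sum_congr rfl fun i _ => by simp [eps, h _]
  · exact Finset.sum_congr rfl fun i _ => by simp [eps, h _]

lemma isMatch_congr {ω₁ ω₂ : ℤ → DyckSym M} (h : hgt ω₁ = hgt ω₂) (q p : ℤ) :
    isMatch ω₁ q p ↔ isMatch ω₂ q p := by
  unfold isMatch
  rw [h]

/-- The canonical word with a given shape. -/
def wsh (M n : ℕ) (hM : 0 < M) (s : Fin n → Bool) : Fin n → DyckSym M :=
  fun i => if s i then Sum.inl ⟨0, hM⟩ else Sum.inr ⟨0, hM⟩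

lemma wsh_isLeft {n : ℕ} (hM : 0 < M) (s : Fin n → Bool) (i : Fin n) :
    (wsh M n hM s i).isLeft = s i := by
  rcases h : s i <;> simp [wsh, h]

/-- Color extraction. -/
def getC : DyckSym M → Fin M := Sum.elim id id

open Classical in
/-- The canonical match position. -/
noncomputable def mq (ωs : ℤ → DyckSym M) (p : ℤ) : ℤ :=
  if h : ∃ q, isMatch ωs q p ∧ (ωs q).isLeft then h.choose else 0

lemma mq_spec {ωs : ℤ → DyckSym M} {p : ℤ}
    (h : ∃ q, isMatch ωs q p ∧ (ωs q).isLeft) :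
    isMatch ωs (mq ωs p) p ∧ (ωs (mq ωs p)).isLeft := by
  rw [mq]
  rw [dif_pos h]
  exact h.choose_spec

lemma dyckH_ext {n : ℕ} (hn : 0 < n) (w : Fin n → DyckSym M) :
    dyckH M n (extw n hn w) =
      2 * ((Finset.univ.filter fun i => (w i).isLeft = true).card : ℤ) - n := by
  unfold dyckH
  rw [← Fin.sum_univ_eq_sum_range (fun j => if (extw n hn w ((j:ℕ):ℤ)).isLeft then (1:ℤ) else -1) n]
  have h1 : ∀ i : Fin n, (if (extw n hn w ((i : ℕ) : ℤ)).isLeft then (1:ℤ) else -1)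
      = 2 * (if (w i).isLeft = true then (1:ℤ) else 0) - 1 := by
    intro i
    rw [extw_coe hn]
    by_cases h : (w i).isLeft <;> simp [h]
  rw [Finset.sum_congr rfl fun i _ => h1 i, Finset.sum_sub_distrib, ← Finset.mul_sum,
    Finset.sum_boole, Finset.sum_const, Finset.card_univ, Fintype.card_fin]
  simp

section Shape

variable {n : ℕ} (hM : 0 < M) (hn2 : 2 ≤ n) (s : Fin n → Bool)

lemma hn' : 2 ≤ n → 0 < n := by omega

/-- Height agreement for words of the same shape. -/
lemma hgt_shape (hn : 0 < n) (w : Fin n → DyckSym M) (hw : ∀ i, (w i).isLeft = s i) :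
    hgt (extw n hn w) = hgt (extw n hn (wsh M n hM s)) := by
  apply hgt_congr
  intro t
  show (w (res n hn t)).isLeft = (wsh M n hM s (res n hn t)).isLeft
  rw [hw, wsh_isLeft]

lemma dyckH_shape (hn : 0 < n) (hs : 2 * (Finset.univ.filter fun i => s i = true).card = n)
    (w : Fin n → DyckSym M) (hw : ∀ i, (w i).isLeft = s i) :
    dyckH M n (extw n hn w) = 0 := by
  rw [dyckH_ext hn]
  have : (Finset.univ.filter fun i => (w i).isLeft = true)
      = (Finset.univ.filter fun i => s i = true) := by
    apply Finset.filter_congr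
    intro i _
    rw [hw]
  rw [this]
  omega

variable (hs : 2 * (Finset.univ.filter fun i => s i = true).card = n)

include hn2 hs in
lemma exists_match_shape (i : Fin n) (hi : s i = false) :
    ∃ q, isMatch (extw n (hn' hn2) (wsh M n hM s)) q ((i : ℕ) : ℤ) ∧
      ((extw n (hn' hn2) (wsh M n hM s)) q).isLeft := by
  have hn : 0 < n := hn' hn2
  apply exists_isMatch (extw_per hn _) hn2
  · exact dyckH_shape s hn hs _ (fun j => wsh_isLeft hM s j)
  · rw [extw_coe hn]
    simp [wsh, hi]

/-- Residue of the match of a closer. -/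
noncomputable def mres (i : Fin n) : Fin n :=
  res n (hn' hn2) (mq (extw n (hn' hn2) (wsh M n hM s)) ((i : ℕ) : ℤ))

include hs in
lemma mres_left (i : Fin n) (hi : s i = false) : s (mres hM hn2 s i) = true := by
  have hn : 0 < n := hn' hn2
  have hsp := mq_spec (exists_match_shape hM hn2 s hs i hi)
  have h2 := hsp.2
  unfold extw at h2
  rw [← wsh_isLeft hM s (mres hM hn2 s i)]
  exact h2

/-- Reconstructed word from shape and opener colors. -/
noncomputable def recw (g : {i : Fin n // s i = true} → Fin M) : Fin n → DyckSym M :=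
  fun i => if h : s i = true then Sum.inl (g ⟨i, h⟩) else
    Sum.inr (if h2 : s (mres hM hn2 s i) = true then g ⟨mres hM hn2 s i, h2⟩ else ⟨0, hM⟩)

lemma recw_shape (g : {i : Fin n // s i = true} → Fin M) (i : Fin n) :
    ((recw hM hn2 s g i).isLeft) = s i := by
  unfold recw
  by_cases h : s i = true <;> simp [h]

include hs in
/-- The key criterion: a word of shape `s` gives a point of the Dyck shift iff each
closer's color agrees with the opener at its matching position. -/
lemma crit (w : Fin n → DyckSym M) (hw : ∀ i, (w i).isLeft = s i) :
    extw n (hn' hn2) w ∈ dyckShiftSet M ↔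
      ∀ (i : Fin n) (a : Fin M), s i = false → w i = Sum.inr a →
        w (mres hM hn2 s i) = Sum.inl a := by
  have hn : 0 < n := hn' hn2
  set ωs := extw n hn (wsh M n hM s) with hωs
  set ωw := extw n hn w with hωw
  have hH : hgt ωw = hgt ωs := hgt_shape hM s hn w hw
  have hbal : dyckH M n ωw = 0 := dyckH_shape s hn hs w hw
  have hperw : ∀ t, ωw (t + n) = ωw t := extw_per hn w
  constructor
  · intro hmem i a hfalse hwi
    have hsp := mq_spec (exists_match_shape hM hn2 s hs i hfalse)
    have hm : isMatch ωw (mq ωs ((i:ℕ):ℤ)) ((i:ℕ):ℤ) := (isMatch_congr hH _ _).2 hsp.1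
    have hcl : ωw ((i:ℕ):ℤ) = Sum.inr a := by rw [hωw, extw_coe hn]; exact hwi
    have := (shiftSet_iff ωw).1 hmem ((i:ℕ):ℤ) (mq ωs ((i:ℕ):ℤ)) a hm hcl
    rwa [hωw] at this
  · intro hcol
    rw [shiftSet_iff]
    intro p q a hm hr
    set i : Fin n := res n hn p with hi
    have hwp : ωw p = w i := rfl
    have hfalse : s i = false := by
      rw [← hw i]
      rw [hwp] at hr
      rw [hr]
      rfl
    have hwi : w i = Sum.inr a := by rw [← hwp]; exact hr
    -- p = ↑i + (p / n) * n
    have hpmod : ((i:ℕ):ℤ) = p % (n:ℤ) := by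
      simp only [hi, res]
      have hne : (n:ℤ) ≠ 0 := by exact_mod_cast hn.ne'
      have h1 : 0 ≤ p % (n:ℤ) := Int.emod_nonneg p hne
      omega
    set c : ℤ := p / (n:ℤ) with hc
    have hp : p = ((i:ℕ):ℤ) + c * n := by
      rw [hpmod, hc]
      have h3 := Int.emod_add_mul_ediv p (n:ℤ)
      have hcomm : (n:ℤ) * (p / n) = (p / n) * n := mul_comm _ _
      omega
    have hms : isMatch ωs q p := (isMatch_congr hH _ _).1 hm
    have hpers : ∀ t, ωs (t + n) = ωs t := extw_per hn _
    have hbals : dyckH M n ωs = 0 := dyckH_shape s hn hs _ (fun j => wsh_isLeft hM s j)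
    have hshift : isMatch ωs (q + (-c) * n) (p + (-c) * n) :=
      isMatch_shift hpers hbals (-c) hms
    have hpi : p + (-c) * n = ((i:ℕ):ℤ) := by
      have : (-c) * (n:ℤ) = -(c * n) := by ring
      omega
    rw [hpi] at hshift
    have hsp := mq_spec (exists_match_shape hM hn2 s hs i hfalse)
    have hq : q + (-c) * n = mq ωs ((i:ℕ):ℤ) := match_unique hshift hsp.1
    have hgoal := hcol i a hfalse hwi
    have hresq : res n hn q = mres hM hn2 s i := by
      apply res_congr
      have hq2 : q = mq ωs ((i:ℕ):ℤ) + c * n := by omega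
      rw [hq2, Int.add_mul_emod_self_right]
    show w (res n hn q) = Sum.inl a
    rw [hresq]
    exact hgoal


include hs in
lemma recw_crit (g : {i : Fin n // s i = true} → Fin M) (i : Fin n) (a : Fin M)
    (hfalse : s i = false) (hri : recw hM hn2 s g i = Sum.inr a) :
    recw hM hn2 s g (mres hM hn2 s i) = Sum.inl a := by
  have hmres := mres_left hM hn2 s hs i hfalse
  have h1 : recw hM hn2 s g i = Sum.inr (g ⟨mres hM hn2 s i, hmres⟩) := by
    unfold recw
    rw [dif_neg (by simp [hfalse]), dif_pos hmres]
  have ha : g ⟨mres hM hn2 s i, hmres⟩ = a := Sum.inr.inj (h1.symm.trans hri)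
  unfold recw
  rw [dif_pos hmres, ha]

include hs in
lemma recw_mem (g : {i : Fin n // s i = true} → Fin M) :
    extw n (hn' hn2) (recw hM hn2 s g) ∈ dyckPer0 M n := by
  have hn : 0 < n := hn' hn2
  refine ⟨⟨?_, ?_⟩, ?_⟩
  · rw [crit hM hn2 s hs _ (recw_shape hM hn2 s g)]
    exact fun i a hf hri => recw_crit hM hn2 s hs g i a hf hri
  · rw [per_iff]
    exact extw_per hn _
  · exact dyckH_shape s hn hs _ (recw_shape hM hn2 s g)

include hs in
lemma recw_recover (w : Fin n → DyckSym M) (hw : ∀ i, (w i).isLeft = s i)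
    (hmem : extw n (hn' hn2) w ∈ dyckShiftSet M) :
    recw hM hn2 s (fun q => getC (w q.1)) = w := by
  funext i
  by_cases h : s i = true
  · unfold recw
    rw [dif_pos h]
    have hl : (w i).isLeft = true := by rw [hw]; exact h
    obtain ⟨b, hb⟩ := Sum.isLeft_iff.1 hl
    show Sum.inl (getC (w i)) = w i
    rw [hb]
    rfl
  · have hfalse : s i = false := by simpa using h
    have hri : (w i).isRight := Sum.not_isLeft.1 (by rw [hw, hfalse]; simp)
    obtain ⟨a, ha⟩ := Sum.isRight_iff.1 hri
    have hcrit := (crit hM hn2 s hs w hw).1 hmem i a hfalse ha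
    unfold recw
    rw [dif_neg (by simp [hfalse]), dif_pos (mres_left hM hn2 s hs i hfalse)]
    show Sum.inr (getC (w (mres hM hn2 s i))) = w i
    rw [hcrit, ha]
    rfl

end Shape

end Recon


lemma extw_restrict {n : ℕ} (hn : 0 < n) {ω : ℤ → DyckSym M} (hper : ∀ t, ω (t + n) = ω t) :
    extw n hn (fun i : Fin n => ω ((i:ℕ):ℤ)) = ω := by
  funext t
  show ω (((res n hn t):ℕ):ℤ) = ω t
  have hne : (n:ℤ) ≠ 0 := by exact_mod_cast hn.ne'
  have h1 : (((res n hn t):ℕ):ℤ) = t % n := by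
    simp only [res]
    have := Int.emod_nonneg t hne
    omega
  rw [h1]
  have h2 := per_mul hper (t / n) (t % n)
  have h3 : t % n + (t / n) * n = t := by
    have h4 := Int.emod_add_mul_ediv t n
    have h5 : (n:ℤ) * (t / n) = (t / n) * n := mul_comm _ _
    omega
  rw [h3] at h2
  exact h2.symm

lemma dyckH_parity (ω : ℤ → DyckSym M) (m : ℕ) : ∃ L : ℕ, dyckH M m ω = 2 * (L:ℤ) - m := by
  induction m with
  | zero => exact ⟨0, by simp [dyckH]⟩
  | succ m ih =>
    obtain ⟨L, hL⟩ := ih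
    unfold dyckH at hL ⊢
    rw [Finset.sum_range_succ, hL]
    by_cases h : (ω (m:ℤ)).isLeft
    · exact ⟨L+1, by rw [if_pos h]; push_cast; ring⟩
    · exact ⟨L, by rw [if_neg h]; push_cast; ring⟩

theorem card_per0 {n : ℕ} (hM : 0 < M) (hn2 : 2 ≤ n) (hEven : Even n) :
    Nat.card (dyckPer0 M n) = n.choose (n / 2) * M ^ (n / 2) := by
  classical
  have hn : 0 < n := hn' hn2
  -- restriction to one period
  let F := {w : Fin n → DyckSym M // extw n hn w ∈ dyckPer0 M n}
  let e1 : dyckPer0 M n ≃ F :=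
    { toFun := fun ω => ⟨fun i => ω.1 ((i:ℕ):ℤ), by
        have hper := (per_iff (n := n) (ω := ω.1)).1 ω.2.1.2
        rw [extw_restrict hn hper]
        exact ω.2⟩
      invFun := fun w => ⟨extw n hn w.1, w.2⟩
      left_inv := fun ω => Subtype.ext (by
        have hper := (per_iff (n := n) (ω := ω.1)).1 ω.2.1.2
        exact extw_restrict hn hper)
      right_inv := fun w => Subtype.ext (by funext i; exact extw_coe hn w.1 i) }
  -- shapes
  let Bsh := {s : Fin n → Bool // 2 * (Finset.univ.filter fun i => s i = true).card = n}
  let shF : F → Bsh := fun w => ⟨fun i => (w.1 i).isLeft, by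
    have hH := w.2.2
    rw [dyckH_ext hn] at hH
    have : (Finset.univ.filter fun i => (w.1 i).isLeft = true).card
        = (Finset.univ.filter fun i => (fun j => (w.1 j).isLeft) i = true).card := rfl
    omega⟩
  let e2 : F ≃ Σ s : Bsh, {w : F // shF w = s} := (Equiv.sigmaFiberEquiv shF).symm
  have hcard : ∀ s : Bsh, Fintype.card {i : Fin n // s.1 i = true} = n / 2 := by
    intro s
    rw [Fintype.card_subtype]
    have := s.2
    omega
  let e3 : ∀ s : Bsh, {w : F // shF w = s} ≃ ({i : Fin n // s.1 i = true} → Fin M) :=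
    fun s =>
    { toFun := fun w q => getC (w.1.1 q.1)
      invFun := fun g => ⟨⟨recw hM hn2 s.1 g, recw_mem hM hn2 s.1 s.2 g⟩, by
        apply Subtype.ext
        funext i
        exact recw_shape hM hn2 s.1 g i⟩
      left_inv := fun w => by
        have hw : ∀ i, (w.1.1 i).isLeft = s.1 i :=
          fun i => congrFun (congrArg Subtype.val w.2) i
        apply Subtype.ext
        apply Subtype.ext
        exact recw_recover hM hn2 s.1 s.2 w.1.1 hw w.1.2.1.1
      right_inv := fun g => by
        funext q
        show getC (recw hM hn2 s.1 g q.1) = g q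
        unfold recw
        rw [dif_pos q.2]
        rfl }
  let e5 : F ≃ Bsh × (Fin (n/2) → Fin M) :=
    e2.trans ((Equiv.sigmaCongrRight (fun s => (e3 s).trans
      (Equiv.arrowCongr (Fintype.equivFinOfCardEq (hcard s)) (Equiv.refl (Fin M))))).trans
      (Equiv.sigmaEquivProd _ _))
  -- shapes are counted by binomial coefficients
  let e6 : Bsh ≃ {A : Finset (Fin n) // A.card = n / 2} :=
    { toFun := fun s => ⟨Finset.univ.filter (fun i => s.1 i = true), by
        have := s.2; omega⟩
      invFun := fun A => ⟨fun i => decide (i ∈ A.1), by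
        have he : (Finset.univ.filter fun i => (fun j => decide (j ∈ A.1)) i = true) = A.1 := by
          ext i; simp
        rw [he, A.2]
        obtain ⟨m, hm⟩ := hEven
        omega⟩
      left_inv := fun s => Subtype.ext (by
        funext i
        simp only [Finset.mem_filter, Finset.mem_univ, true_and, decide_eq_true_iff]
        cases h : s.1 i <;> simp [h])
      right_inv := fun A => Subtype.ext (by ext i; simp) }
  rw [Nat.card_congr (e1.trans e5), Nat.card_prod, Nat.card_congr e6]
  rw [Nat.card_eq_fintype_card, Nat.card_eq_fintype_card]
  rw [Fintype.card_finset_len, Fintype.card_fin, Fintype.card_fun, Fintype.card_fin,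
    Fintype.card_fin]

end DyckAux

theorem stmt0 (M n : ℕ) (hM : 2 ≤ M) (hn : 0 < n) :
    (dyckPer0 M n).ncard =
      if Even n then n.choose (n / 2) * M ^ (n / 2) else 0 := by
  by_cases hEven : Even n
  · rw [if_pos hEven]
    have hn2 : 2 ≤ n := by obtain ⟨m, hm⟩ := hEven; omega
    rw [← Nat.card_coe_set_eq]
    exact DyckAux.card_per0 (by omega) hn2 hEven
  · rw [if_neg hEven]
    have hempty : dyckPer0 M n = ∅ := by
      ext ω
      simp only [Set.mem_empty_iff_false, iff_false]
      intro hω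
      obtain ⟨L, hL⟩ := DyckAux.dyckH_parity ω n
      rw [hω.2] at hL
      exact hEven ⟨L, by omega⟩
    rw [hempty, Set.ncard_empty]
end

section
/- For the Dyck shift on 2M symbols, for each n ∈ ℕ the number of period-n periodic points ω with H_n(ω) > 0 equals (M+1)^n − Σ_{i=0}^{⌊n/2⌋} binom(n,i) M^i. -/
/-- Period-`n` points with `H_n > 0` (1-unstable / negative multiplier). -/
def dyckPerA (M n : ℕ) : Set (ℤ → DyckSym M) :=
  {ω | ω ∈ dyckPer M n ∧ 0 < dyckH M n ω}

/-- Period-`n` points with `H_n < 0`. -/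
def dyckPerB (M n : ℕ) : Set (ℤ → DyckSym M) :=
  {ω | ω ∈ dyckPer M n ∧ dyckH M n ω < 0}


namespace DyckAux

variable {M : ℕ}




abbrev St (M : ℕ) := List (Fin M) × List (Fin M)

def step (M : ℕ) : Option (St M) → DyckSym M → Option (St M)
  | none, _ => none
  | some (rb, ra), Sum.inl k => some (rb, k :: ra)
  | some (rb, ra), Sum.inr k =>
      match ra with
      | [] => some (k :: rb, [])
      | j :: t => if j = k then some (rb, t) else none

def run (M : ℕ) (w : List (DyckSym M)) : Option (St M) :=
  w.foldl (step M) (some ([], []))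

def reprSt (s : St M) : List (DyckSym M) :=
  s.1.reverse.map Sum.inr ++ s.2.reverse.map Sum.inl

lemma step_repr (s : St M) (x : DyckSym M) :
    dyckRedStep M (some (reprSt s)) x = (step M (some s) x).map reprSt := by
  obtain ⟨rb, ra⟩ := s
  cases x with
  | inl k =>
      simp [dyckRedStep, step, reprSt]
  | inr k =>
      cases ra with
      | nil =>
          have h1 : (reprSt ((rb, []) : St M)).getLast? = (rb.head?).map Sum.inr := by
            rw [List.getLast?_eq_head?_reverse]
            simp [reprSt]
          cases hrb : rb with
          | nil =>
              simp [hrb] at h1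
              simp [dyckRedStep, h1, step, reprSt]
          | cons r rs =>
              simp [hrb] at h1
              simp [dyckRedStep, h1, step, reprSt, hrb]
      | cons j t =>
          have hre : reprSt ((rb, j :: t) : St M)
              = (rb.reverse.map Sum.inr ++ t.reverse.map Sum.inl) ++ [Sum.inl j] := by
            simp [reprSt]
          have h1 : (reprSt ((rb, j :: t) : St M)).getLast? = some (Sum.inl j) := by
            rw [hre]; exact List.getLast?_concat
          by_cases hjk : j = k
          · simp [dyckRedStep, h1, step, hjk, hre, List.dropLast_concat, reprSt]
          · simp [dyckRedStep, h1, step, hjk]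

lemma foldl_repr (w : List (DyckSym M)) : ∀ s : St M,
    w.foldl (dyckRedStep M) (some (reprSt s)) = (w.foldl (step M) (some s)).map reprSt := by
  induction w with
  | nil => intro s; simp
  | cons x w ih =>
      intro s
      rw [List.foldl_cons, List.foldl_cons, step_repr]
      cases h : step M (some s) x with
      | none =>
          simp only [Option.map_none]
          have : ∀ v : List (DyckSym M), v.foldl (dyckRedStep M) none = none := by
            intro v; induction v with
            | nil => rfl
            | cons a v ihv => rw [List.foldl_cons]; exact ihv
          rw [this]
          have : ∀ v : List (DyckSym M), v.foldl (step M) (none : Option (St M)) = none := by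
            intro v; induction v with
            | nil => rfl
            | cons a v ihv => rw [List.foldl_cons]; exact ihv
          rw [this]; rfl
      | some s' => simpa using ih s'

lemma foldl_step_none (v : List (DyckSym M)) : v.foldl (step M) (none : Option (St M)) = none := by
  induction v with
  | nil => rfl
  | cons a v ihv => rw [List.foldl_cons]; exact ihv

lemma dyckRed_eq_none_iff (w : List (DyckSym M)) : dyckRed M w = none ↔ run M w = none := by
  have : dyckRed M w = (run M w).map reprSt := by
    have := foldl_repr (M := M) w ([], [])
    simpa [dyckRed, run, reprSt] using this
  rw [this]
  cases run M w <;> simp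





/-- monotone failure: a run failing from a shallow stack fails from any deeper stack. -/
lemma mono_fail (v : List (DyckSym M)) : ∀ (rb₀ ra₀ rb₁ rest : List (Fin M)),
    v.foldl (step M) (some (rb₀, ra₀)) = none →
    v.foldl (step M) (some (rb₁, ra₀ ++ rest)) = none := by
  induction v with
  | nil => intro _ _ _ _ h; exact absurd h (by simp)
  | cons x v ih =>
      intro rb₀ ra₀ rb₁ rest h
      rw [List.foldl_cons] at h ⊢
      cases x with
      | inl k =>
          have : (k :: (ra₀ ++ rest)) = (k :: ra₀) ++ rest := rfl
          simp only [step] at h ⊢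
          rw [this]
          exact ih _ _ _ _ h
      | inr k =>
          cases ra₀ with
          | nil =>
              simp only [step] at h ⊢
              cases rest with
              | nil => exact ih _ _ _ ([]) h
              | cons j t =>
                  by_cases hjk : j = k
                  · simp only [List.nil_append, hjk, if_pos rfl]
                    exact ih _ _ _ t h
                  · simp only [List.nil_append, if_neg hjk]
                    exact foldl_step_none v
          | cons j t =>
              by_cases hjk : j = k
              · simp only [step, List.cons_append, if_pos hjk] at h ⊢
                exact ih _ _ _ _ h
              · simp only [step, List.cons_append, if_neg hjk] at h ⊢
                exact foldl_step_none v

/-- overflow only grows -/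
lemma overflow_mono (v : List (DyckSym M)) : ∀ (b a : List (Fin M)) (s' : St M),
    v.foldl (step M) (some (b, a)) = some s' → ∃ c, s'.1 = c ++ b := by
  induction v with
  | nil => intro b a s' h; simp at h; subst h; exact ⟨[], rfl⟩
  | cons x v ih =>
      intro b a s' h
      rw [List.foldl_cons] at h
      cases x with
      | inl k => exact ih _ _ _ h
      | inr k =>
          cases a with
          | nil =>
              simp only [step] at h
              obtain ⟨c, hc⟩ := ih _ _ _ h
              exact ⟨c ++ [k], by simpa using hc⟩
          | cons j t =>
              by_cases hjk : j = k
              · simp only [step, if_pos hjk] at h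
                exact ih _ _ _ h
              · simp only [step, if_neg hjk] at h
                rw [foldl_step_none] at h; exact absurd h (by simp)

/-- composition success -/
lemma comp_ok (v : List (DyckSym M)) : ∀ (b a rb rest X rb' ra' : List (Fin M)),
    v.foldl (step M) (some (b, a)) = some (rb', ra') → rb' = X ++ b →
    v.foldl (step M) (some (rb, a ++ (X.reverse ++ rest))) = some (rb, ra' ++ rest) := by
  induction v with
  | nil =>
      intro b a rb rest X rb' ra' h hX
      simp only [List.foldl_nil, Option.some.injEq, Prod.mk.injEq] at h
      obtain ⟨h1, h2⟩ := h
      have hXnil : X = [] := by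
        have := h1 ▸ hX
        have : X ++ b = [] ++ b := by simpa using this.symm
        exact List.append_cancel_right this
      subst hXnil h2
      simp
  | cons x v ih =>
      intro b a rb rest X rb' ra' h hX
      rw [List.foldl_cons] at h ⊢
      cases x with
      | inl k =>
          simp only [step] at h ⊢
          exact ih (b) (k :: a) rb rest X rb' ra' h hX
      | inr k =>
          cases a with
          | nil =>
              simp only [step, List.nil_append] at h ⊢
              obtain ⟨c, hc⟩ := overflow_mono v _ _ _ h
              simp only at hc
              have hcX : X = c ++ [k] := by
                apply List.append_cancel_right (bs := b)
                rw [← hX, hc]; simp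
              subst hcX
              have : (c ++ [k]).reverse ++ rest = k :: (c.reverse ++ rest) := by simp
              rw [this]
              simp only [step, if_pos rfl]
              have := ih (k :: b) [] rb rest c rb' ra' h (by rw [hc])
              simpa using this
          | cons j t =>
              by_cases hjk : j = k
              · simp only [step, List.cons_append, if_pos hjk] at h ⊢
                exact ih b t rb rest X rb' ra' h hX
              · simp only [step, List.cons_append, if_neg hjk] at h
                rw [foldl_step_none] at h; exact absurd h (by simp)

/-- composition failure: if the underlying stack disagrees with the chronological
overflow at the first difference, the run dies. -/
lemma comp_fail (v : List (DyckSym M)) : ∀ (b a rb rest X Y Z : List (Fin M)) (y z : Fin M)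
    (rb' ra' : List (Fin M)),
    v.foldl (step M) (some (b, a)) = some (rb', ra') → rb' = X ++ b →
    X.reverse = Y ++ y :: Z → y ≠ z →
    v.foldl (step M) (some (rb, a ++ (Y ++ z :: rest))) = none := by
  induction v with
  | nil =>
      intro b a rb rest X Y Z y z rb' ra' h hX hY hyz
      simp only [List.foldl_nil, Option.some.injEq, Prod.mk.injEq] at h
      have hXnil : X = [] := by
        apply List.append_cancel_right (bs := b)
        rw [← hX, h.1]; simp
      subst hXnil
      simp at hY
  | cons x v ih =>
      intro b a rb rest X Y Z y z rb' ra' h hX hY hyz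
      rw [List.foldl_cons] at h ⊢
      cases x with
      | inl k =>
          simp only [step] at h ⊢
          exact ih (b) (k :: a) rb rest X Y Z y z rb' ra' h hX hY hyz
      | inr k =>
          cases a with
          | nil =>
              simp only [step, List.nil_append] at h ⊢
              obtain ⟨c, hc⟩ := overflow_mono v _ _ _ h
              simp only at hc
              have hcX : X = c ++ [k] := by
                apply List.append_cancel_right (bs := b)
                rw [← hX, hc]; simp
              subst hcX
              rw [List.reverse_append] at hY
              simp only [List.reverse_cons, List.reverse_nil, List.nil_append,
                List.singleton_append] at hY
              -- hY : k :: c.reverse = Y ++ y :: Z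
              cases Y with
              | nil =>
                  simp only [List.nil_append, List.cons.injEq] at hY
                  obtain ⟨hky, _⟩ := hY
                  simp only [List.nil_append]
                  have : z ≠ k := fun hzk => hyz (hky ▸ hzk.symm)
                  simp only [step, if_neg (fun hh : z = k => this hh)]
                  exact foldl_step_none v
              | cons y0 Y' =>
                  simp only [List.cons_append, List.cons.injEq] at hY
                  obtain ⟨hky0, hcrev⟩ := hY
                  subst hky0
                  simp only [List.cons_append, step, if_pos rfl]
                  exact ih (k :: b) [] rb rest c Y' Z y z rb' ra' h (by rw [hc]) hcrev hyz
          | cons j t =>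
              by_cases hjk : j = k
              · simp only [step, List.cons_append, if_pos hjk] at h ⊢
                exact ih b t rb rest X Y Z y z rb' ra' h hX hY hyz
              · simp only [step, List.cons_append, if_neg hjk] at h
                rw [foldl_step_none] at h; exact absurd h (by simp)

def listH (w : List (DyckSym M)) : ℤ :=
  (w.map fun x => if x.isLeft then (1 : ℤ) else -1).sum

lemma listH_run (w : List (DyckSym M)) : ∀ (rb ra rb' ra' : List (Fin M)),
    w.foldl (step M) (some (rb, ra)) = some (rb', ra') →
    listH w + ((ra.length : ℤ) - rb.length) = (ra'.length : ℤ) - rb'.length := by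
  induction w with
  | nil => intro rb ra rb' ra' h; simp at h; obtain ⟨h1, h2⟩ := h; subst h1; subst h2; simp [listH]
  | cons x w ih =>
      intro rb ra rb' ra' h
      rw [List.foldl_cons] at h
      cases x with
      | inl k =>
          simp only [step] at h
          have := ih _ _ _ _ h
          simp only [listH, List.map_cons, List.sum_cons, Sum.isLeft_inl, if_pos rfl, List.length_cons] at this ⊢
          push_cast at this ⊢
          linarith [this]
      | inr k =>
          cases ra with
          | nil =>
              simp only [step] at h
              have := ih _ _ _ _ h
              simp only [listH, List.map_cons, List.sum_cons, Sum.isLeft_inr] at this ⊢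
              simp only [List.length_cons, List.length_nil] at this ⊢
              push_cast at this ⊢
              linarith [this]
          | cons j t =>
              by_cases hjk : j = k
              · simp only [step, if_pos hjk] at h
                have := ih _ _ _ _ h
                simp only [listH, List.map_cons, List.sum_cons, Sum.isLeft_inr] at this ⊢
                simp only [List.length_cons] at this ⊢
                push_cast at this ⊢
                linarith [this]
              · simp only [step, if_neg hjk] at h
                rw [foldl_step_none] at h; exact absurd h (by simp)





/-- final stack of the shape simulation -/
def simSt (a : List (Fin M)) : List (Option (Fin M)) → List (Fin M)
  | [] => a
  | some c :: F => simSt (c :: a) F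
  | none :: F =>
      match a with
      | [] => simSt [] F
      | _ :: a' => simSt a' F

/-- overflow count of the shape simulation -/
def simT (a : List (Fin M)) : List (Option (Fin M)) → ℕ
  | [] => 0
  | some c :: F => simT (c :: a) F
  | none :: F =>
      match a with
      | [] => simT [] F + 1
      | _ :: a' => simT a' F

/-- canonical word built from a shape `F`, working stack `a`, overflow colors `O` -/
def build (d : Fin M) (a O : List (Fin M)) : List (Option (Fin M)) → List (DyckSym M)
  | [] => []
  | some c :: F => Sum.inl c :: build d (c :: a) O F
  | none :: F =>
      match a with
      | [] => Sum.inr (O.headD d) :: build d [] O.tail F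
      | j :: a' => Sum.inr j :: build d a' O F

lemma build_shape (d : Fin M) (F : List (Option (Fin M))) : ∀ a O,
    (build d a O F).map Sum.getLeft? = F := by
  induction F with
  | nil => intro a O; simp [build]
  | cons o F ih =>
      intro a O
      cases o with
      | some c => simp [build, ih]
      | none =>
          cases a with
          | nil => simp [build, ih]
          | cons j a' => simp [build, ih]

lemma getD_tail (O : List (Fin M)) (s : ℕ) (d : Fin M) :
    O.tail.getD s d = O.getD (s + 1) d := by
  cases O <;> simp

/-- the run of a built word -/
lemma run_build (d : Fin M) (F : List (Option (Fin M))) : ∀ a O rb,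
    (build d a O F).foldl (step M) (some (rb, a)) =
      some (((List.range (simT a F)).map (fun s => O.getD s d)).reverse ++ rb, simSt a F) := by
  induction F with
  | nil => intro a O rb; simp [build, simT, simSt]
  | cons o F ih =>
      intro a O rb
      cases o with
      | some c =>
          simp only [build, List.foldl_cons, step]
          rw [ih (c :: a) O rb]
          simp [simT, simSt]
      | none =>
          cases a with
          | nil =>
              simp only [build, List.foldl_cons, step]
              rw [ih [] O.tail (O.headD d :: rb)]
              congr 1
              have hT : simT ([] : List (Fin M)) (none :: F) = simT [] F + 1 := rfl
              have hS : simSt ([] : List (Fin M)) (none :: F) = simSt [] F := rfl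
              rw [hT, hS]
              congr 1
              rw [List.range_succ_eq_map]
              simp only [List.map_cons, List.map_map, List.reverse_cons]
              have h0 : O.getD 0 d = O.headD d := by cases O <;> simp
              have hcomp : ((fun s => O.getD s d) ∘ Nat.succ) = fun s => O.tail.getD s d := by
                funext s; rw [Function.comp_apply, getD_tail]
              rw [h0, hcomp, List.append_assoc]
              rfl
          | cons j a' =>
              simp only [build, List.foldl_cons, step, if_pos rfl, if_true]
              rw [ih a' O rb]
              rfl

/-- every surviving word is a built word -/
lemma eq_build (d : Fin M) (w : List (DyckSym M)) : ∀ (b a rb' ra' : List (Fin M)),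
    w.foldl (step M) (some (b, a)) = some (rb', ra') → ∀ c, rb' = c ++ b →
    w = build d a c.reverse (w.map Sum.getLeft?) := by
  induction w with
  | nil =>
      intro b a rb' ra' h c hc
      simp [build]
  | cons x w ih =>
      intro b a rb' ra' h c hc
      rw [List.foldl_cons] at h
      cases x with
      | inl k =>
          simp only [step] at h
          simp only [List.map_cons, Sum.getLeft?, build]
          rw [← ih b (k :: a) rb' ra' h c hc]
      | inr k =>
          cases a with
          | nil =>
              simp only [step] at h
              obtain ⟨c', hc'⟩ := overflow_mono w _ _ _ h
              simp only at hc'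
              have hcc : c = c' ++ [k] := by
                apply List.append_cancel_right (bs := b)
                rw [← hc, hc']; simp
              subst hcc
              simp only [List.map_cons, Sum.getLeft?, build, List.reverse_append,
                List.reverse_cons, List.reverse_nil, List.nil_append, List.singleton_append,
                List.headD_cons, List.tail_cons, List.cons.injEq]
              exact ⟨trivial, by simpa using ih (k :: b) [] rb' ra' h c' (by rw [hc'])⟩
          | cons j t =>
              by_cases hjk : j = k
              · simp only [step, if_pos hjk] at h
                subst hjk
                simp only [List.map_cons, Sum.getLeft?, build, List.cons.injEq]
                exact ⟨trivial, ih b t rb' ra' h c hc⟩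
              · simp only [step, if_neg hjk] at h
                rw [foldl_step_none] at h; exact absurd h (by simp)

/-- counting: stack length minus overflow equals base plus signed count -/
lemma sim_count (F : List (Option (Fin M))) : ∀ a : List (Fin M),
    ((simSt a F).length : ℤ) - simT a F =
      (a.length : ℤ) + 2 * F.countP (fun o => o.isSome) - F.length := by
  induction F with
  | nil => intro a; simp [simSt, simT]
  | cons o F ih =>
      intro a
      cases o with
      | some c =>
          have := ih (c :: a)
          simp only [simSt, simT, List.countP_cons, List.length_cons] at this ⊢
          simp only [Option.isSome_some, if_pos rfl, List.length_cons] at *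
          push_cast at this ⊢
          linarith
      | none =>
          cases a with
          | nil =>
              have := ih ([] : List (Fin M))
              simp only [simSt, simT, List.countP_cons, List.length_cons] at this ⊢
              simp only [Option.isSome_none] at *
              push_cast at this ⊢
              linarith
          | cons j a' =>
              have := ih a'
              simp only [simSt, simT, List.countP_cons, List.length_cons] at this ⊢
              simp only [Option.isSome_none] at *
              push_cast at this ⊢
              linarith

lemma map_range_getD {α : Type*} (d : α) (l : List α) : ∀ t, t ≤ l.length →
    (List.range t).map (fun s => l.getD s d) = l.take t := by
  induction l with
  | nil =>
      intro t ht
      have : t = 0 := Nat.le_zero.mp ht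
      subst this; simp
  | cons x l ih =>
      intro t ht
      cases t with
      | zero => simp
      | succ t' =>
          rw [List.range_succ_eq_map]
          simp only [List.map_cons, List.map_map, List.take_cons, List.getD_cons_zero]
          congr 1
          have : ((fun s => (x :: l).getD s d) ∘ Nat.succ) = fun s => l.getD s d := by
            funext s; simp
          rw [this]
          exact ih t' (by simpa using ht)


def seg (ω : ℤ → DyckSym M) (j : ℤ) (L : ℕ) : List (DyckSym M) :=
  (List.range L).map (fun i : ℕ => ω (j + i))

lemma subword_eq_seg (ω : ℤ → DyckSym M) (j k : ℤ) :
    dyckSubword M ω j k = seg ω j (k - j + 1).toNat := by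
  unfold dyckSubword seg
  have hc : ((List.range (k - j + 1).toNat : List ℕ) : List ℤ) =
      (List.range (k - j + 1).toNat).map (fun i : ℕ => (i : ℤ)) := by
    induction List.range (k - j + 1).toNat with
    | nil => rfl
    | cons a l ih => simp only [List.map_cons, ← ih]; rfl
  rw [hc, List.map_map]
  rfl

lemma seg_add (ω : ℤ → DyckSym M) (j : ℤ) (L1 L2 : ℕ) :
    seg ω j (L1 + L2) = seg ω j L1 ++ seg ω (j + L1) L2 := by
  unfold seg
  rw [List.range_add, List.map_append, List.map_map]
  congr 1
  apply List.map_congr_left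
  intro a _
  simp only [Function.comp_apply]
  congr 1
  push_cast
  ring

def lpow (w : List (DyckSym M)) : ℕ → List (DyckSym M)
  | 0 => []
  | m + 1 => lpow w m ++ w

section Periodic

variable {ω : ℤ → DyckSym M} {n : ℕ}

lemma per_shift (hper : ∀ i, ω (i + (n : ℤ)) = ω i) (t : ℤ) (i : ℤ) :
    ω (i + t * n) = ω i := by
  induction t using Int.induction_on with
  | zero => simp
  | succ m ih =>
      have : i + ((m : ℤ) + 1) * n = (i + m * n) + n := by ring
      rw [this, hper, ih]
  | pred m ih =>
      have : i + (-(m : ℤ) - 1) * n + n = i + (-(m : ℤ)) * n := by ring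
      have h2 := hper (i + (-(m : ℤ) - 1) * n)
      rw [this] at h2
      rw [← h2]
      exact ih

lemma seg_per_shift (hper : ∀ i, ω (i + (n : ℤ)) = ω i) (t : ℤ) (j : ℤ) (L : ℕ) :
    seg ω (j + t * n) L = seg ω j L := by
  unfold seg
  congr 1
  funext i
  have : j + t * n + i = (j + i) + t * n := by ring
  rw [this, per_shift hper]

lemma seg_lpow (hper : ∀ i, ω (i + (n : ℤ)) = ω i) :
    ∀ m, seg ω 0 (m * n) = lpow (seg ω 0 n) m := by
  intro m
  induction m with
  | zero => simp [seg, lpow]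
  | succ m ih =>
      have h1 : (m + 1) * n = m * n + n := by ring
      rw [h1, seg_add, ih, lpow]
      congr 1
      have h2 : (0 : ℤ) + (m * n : ℕ) = 0 + (m : ℤ) * n := by push_cast; ring
      rw [h2, seg_per_shift hper]

end Periodic

lemma run_factor (u v x : List (DyckSym M)) (h : run M (u ++ v ++ x) ≠ none) :
    run M v ≠ none := by
  intro hv
  apply h
  unfold run at *
  rw [List.foldl_append, List.foldl_append]
  have h2 : List.foldl (step M) (u.foldl (step M) (some ([], []))) v = none := by
    cases hu : u.foldl (step M) (some (([], []) : St M)) with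
    | none => exact foldl_step_none v
    | some s =>
        obtain ⟨rb, ra⟩ := s
        have := mono_fail v [] [] rb ra hv
        simpa using this
  rw [h2, foldl_step_none]

lemma run_lpow_aux {w : List (DyckSym M)} {rb ra : List (Fin M)}
    (hrun : run M w = some (rb, ra)) (hpre : rb.reverse <+: ra) :
    ∀ m, ∃ junk, run M (lpow w (m + 1)) = some (rb, ra ++ junk) := by
  intro m
  induction m with
  | zero =>
      refine ⟨[], ?_⟩
      have : lpow w 1 = w := by simp [lpow]
      rw [this, List.append_nil]
      exact hrun
  | succ m ih =>
      obtain ⟨junk, hj⟩ := ih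
      obtain ⟨ra₂, hra₂⟩ := hpre
      have h1 : run M (lpow w (m + 2)) = w.foldl (step M) (some (rb, ra ++ junk)) := by
        show (lpow w (m+1) ++ w).foldl (step M) (some ([], [])) = _
        rw [List.foldl_append]
        show List.foldl (step M) (run M (lpow w (m+1))) w = _
        rw [hj]
      have h2 := comp_ok (M := M) w [] [] rb (ra₂ ++ junk) rb rb ra hrun (by simp)
      have h3 : ([] : List (Fin M)) ++ (rb.reverse ++ (ra₂ ++ junk)) = ra ++ junk := by
        rw [← hra₂]; simp
      rw [h3] at h2
      exact ⟨ra₂ ++ junk, by rw [h1, h2]⟩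

lemma run_lpow {w : List (DyckSym M)} {rb ra : List (Fin M)}
    (hrun : run M w = some (rb, ra)) (hpre : rb.reverse <+: ra) :
    ∀ m, run M (lpow w m) ≠ none := by
  intro m
  cases m with
  | zero => simp [lpow, run]
  | succ m =>
      obtain ⟨junk, hj⟩ := run_lpow_aux hrun hpre m
      rw [hj]; simp

lemma mem_shiftSet {ω : ℤ → DyckSym M} {n : ℕ} (hn : 1 ≤ n)
    (hper : ∀ i, ω (i + (n : ℤ)) = ω i)
    {rb ra : List (Fin M)} (hrun : run M (seg ω 0 n) = some (rb, ra))
    (hpre : rb.reverse <+: ra) :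
    ω ∈ dyckShiftSet M := by
  intro j k _
  rw [Ne, dyckRed_eq_none_iff, subword_eq_seg]
  set L := (k - j + 1).toNat with hL
  set t : ℕ := (-j).toNat with ht
  have hj' : (0 : ℤ) ≤ j + (t : ℤ) * n := by
    have h1 : (-j : ℤ) ≤ (t : ℤ) := Int.self_le_toNat _
    have h2 : (t : ℤ) * 1 ≤ (t : ℤ) * n := by
      apply mul_le_mul_of_nonneg_left _ (by positivity)
      exact_mod_cast hn
    omega
  set j' : ℤ := j + (t : ℤ) * n with hj'def
  have hseg : seg ω j L = seg ω j' L := (seg_per_shift hper t j L).symm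
  rw [hseg]
  set A : ℕ := j'.toNat with hA
  set m : ℕ := A + L with hm
  have hmn : A + L ≤ m * n := by
    calc A + L = m * 1 := by omega
    _ ≤ m * n := Nat.mul_le_mul_left m hn
  set B : ℕ := m * n - (A + L) with hB
  have hsplit : m * n = A + (L + B) := by omega
  have hdecomp : seg ω 0 (m * n) = seg ω 0 A ++ (seg ω (0 + A) L ++ seg ω (0 + A + L) B) := by
    rw [hsplit, seg_add, seg_add]
  have hA' : (0 : ℤ) + (A : ℤ) = j' := by
    rw [hA]
    simp [Int.toNat_of_nonneg hj']
  rw [hA'] at hdecomp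
  have hrunpow : run M (seg ω 0 (m * n)) ≠ none := by
    rw [seg_lpow hper]
    exact run_lpow hrun hpre m
  rw [hdecomp] at hrunpow
  have := run_factor (seg ω 0 A) (seg ω j' L) (seg ω (j' + L) B)
  apply this
  rw [List.append_assoc]
  exact hrunpow

lemma listH_cons (x : DyckSym M) (w : List (DyckSym M)) :
    listH (x :: w) = (if x.isLeft then (1:ℤ) else -1) + listH w := by
  simp [listH]

lemma listH_eq (w : List (DyckSym M)) :
    listH w = 2 * (w.countP fun x => x.isLeft) - w.length := by
  induction w with
  | nil => simp [listH]
  | cons x w ih =>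
      rw [listH_cons, ih, List.countP_cons, List.length_cons]
      cases x with
      | inl k => simp only [Sum.isLeft_inl, if_pos rfl, decide_true, if_pos]; push_cast; ring
      | inr k => simp only [Sum.isLeft_inr, decide_false, if_neg]; push_cast; ring

lemma countP_isLeft_eq (w : List (DyckSym M)) :
    (w.map Sum.getLeft?).countP (fun o => o.isSome) = w.countP (fun x => x.isLeft) := by
  rw [List.countP_map]
  congr 1
  funext x
  cases x <;> rfl

lemma list_sum_range (f : ℕ → ℤ) : ∀ n, ((List.range n).map f).sum = ∑ i ∈ Finset.range n, f i := by
  intro n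
  induction n with
  | zero => simp
  | succ n ih => rw [List.range_succ, Finset.sum_range_succ, List.map_append, List.sum_append, ih]; simp

lemma dyckH_eq_listH (ω : ℤ → DyckSym M) (n : ℕ) : dyckH M n ω = listH (seg ω 0 n) := by
  unfold dyckH listH seg
  rw [List.map_map, list_sum_range]
  apply Finset.sum_congr rfl
  intro i _
  simp

lemma exists_mismatch {α : Type*} [DecidableEq α] :
    ∀ (l₁ l₂ : List α), l₁.length ≤ l₂.length → ¬ l₁ <+: l₂ →
    ∃ (Y Z rest : List α) (y z : α), l₁ = Y ++ y :: Z ∧ l₂ = Y ++ z :: rest ∧ y ≠ z := by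
  intro l₁
  induction l₁ with
  | nil => intro l₂ _ hnp; exact absurd (List.nil_prefix) hnp
  | cons x l₁ ih =>
      intro l₂ hlen hnp
      cases l₂ with
      | nil => simp at hlen
      | cons x₂ l₂ =>
          by_cases hx : x = x₂
          · subst hx
            have hnp' : ¬ l₁ <+: l₂ := fun hc => hnp (List.cons_prefix_cons.mpr ⟨rfl, hc⟩)
            obtain ⟨Y, Z, rest, y, z, h1, h2, h3⟩ := ih l₂ (by simpa using hlen) hnp'
            exact ⟨x :: Y, Z, rest, y, z, by simp [h1], by simp [h2], h3⟩
          · exact ⟨[], l₁, l₂, x, x₂, rfl, rfl, hx⟩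

lemma countP_eq_sum_range {α : Type*} (p : α → Bool) (junk : α) :
    ∀ F : List α, (F.countP p : ℤ) =
      ∑ i ∈ Finset.range F.length, (if p (F.getD i junk) then (1 : ℤ) else 0) := by
  intro F
  induction F with
  | nil => simp
  | cons x F ih =>
      rw [List.countP_cons, List.length_cons, Finset.sum_range_succ']
      simp only [List.getD_cons_succ, List.getD_cons_zero]
      rw [← ih]
      by_cases hp : p x = true
      · simp only [hp, if_pos]; push_cast; ring
      · simp only [hp, if_neg]; simp at hp; simp [hp]

lemma card_filter_isSome {n : ℕ} (f : Fin n → Option (Fin M)) (F : List (Option (Fin M)))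
    (hlen : F.length = n) (hval : ∀ i : Fin n, F.getD (i : ℕ) none = f i) :
    ((Finset.univ.filter fun i : Fin n => (f i).isSome).card : ℤ) = F.countP (fun o => o.isSome) := by
  rw [countP_eq_sum_range _ none F, hlen]
  rw [Finset.card_filter]
  push_cast
  rw [← Fin.sum_univ_eq_sum_range (fun i => if (F.getD i none).isSome = true then (1:ℤ) else 0) n]
  apply Finset.sum_congr rfl
  intro i _
  rw [hval i]

lemma canonical_form (d : Fin M) {w : List (DyckSym M)} {rb ra : List (Fin M)}
    (hrun : run M w = some (rb, ra)) (hpre : rb.reverse <+: ra) :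
    w = build d []
      ((simSt [] (w.map Sum.getLeft?)).take (simT [] (w.map Sum.getLeft?)))
      (w.map Sum.getLeft?) := by
  set F := w.map Sum.getLeft? with hF
  have hbuild : w = build d [] rb.reverse F := by
    exact eq_build d w [] [] rb ra hrun rb (by simp)
  have hrun2 : run M w =
      some (((List.range (simT [] F)).map (fun s => rb.reverse.getD s d)).reverse ++ [],
        simSt [] F) := by
    conv_lhs => rw [hbuild]
    exact run_build d F [] rb.reverse []
  rw [hrun] at hrun2
  simp only [List.append_nil, Option.some.injEq, Prod.mk.injEq] at hrun2
  obtain ⟨hrb, hra⟩ := hrun2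
  have hlen : rb.length = simT [] F := by
    rw [hrb]; simp
  have hrbrev : rb.reverse = (simSt [] F).take (simT [] F) := by
    have h1 : rb.reverse = ra.take rb.reverse.length := List.prefix_iff_eq_take.mp hpre
    rw [h1, List.length_reverse, hlen, hra]
  conv_lhs => rw [hbuild, hrbrev]

lemma good_unique (d : Fin M) {w w' : List (DyckSym M)}
    (hF : w.map Sum.getLeft? = w'.map Sum.getLeft?)
    (hw : ∃ rb ra, run M w = some (rb, ra) ∧ rb.length < ra.length ∧ rb.reverse <+: ra)
    (hw' : ∃ rb ra, run M w' = some (rb, ra) ∧ rb.length < ra.length ∧ rb.reverse <+: ra) :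
    w = w' := by
  obtain ⟨rb, ra, hrun, _, hpre⟩ := hw
  obtain ⟨rb', ra', hrun', _, hpre'⟩ := hw'
  rw [canonical_form d hrun hpre, canonical_form d hrun' hpre', hF]

lemma good_exists (d : Fin M) (F : List (Option (Fin M)))
    (hpos : (F.length : ℤ) < 2 * F.countP (fun o => o.isSome)) :
    ∃ w : List (DyckSym M), w.map Sum.getLeft? = F ∧
      ∃ rb ra, run M w = some (rb, ra) ∧ rb.length < ra.length ∧ rb.reverse <+: ra := by
  set S := simSt [] F with hS
  set t := simT [] F with ht
  have hcount := sim_count F []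
  simp only [List.length_nil, Nat.cast_zero, zero_add] at hcount
  rw [← hS, ← ht] at hcount
  have htS : t < S.length := by omega
  set O := S.take t with hO
  have hOlen : O.length = t := by
    rw [hO, List.length_take]
    omega
  refine ⟨build d [] O F, build_shape d F [] O,
    ((List.range t).map (fun s => O.getD s d)).reverse, S, ?_, ?_, ?_⟩
  · have := run_build (M := M) d F [] O []
    rw [List.append_nil] at this
    exact this
  · simp only [List.length_reverse, List.length_map, List.length_range]
    exact htS
  · rw [List.reverse_reverse]
    rw [map_range_getD d O t (by omega)]
    have : O.take t = O := by
      rw [← hOlen]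
      exact List.take_length
    rw [this, hO]
    exact List.take_prefix t S

lemma getD_map_getLeft? (w : List (DyckSym M)) (i : ℕ) (hi : i < w.length) (j : DyckSym M) :
    (w.map Sum.getLeft?).getD i none = Sum.getLeft? (w.getD i j) := by
  rw [List.getD_eq_getElem _ _ (by simpa using hi), List.getD_eq_getElem _ _ hi,
    List.getElem_map]

lemma run_ne_none_of_good {w : List (DyckSym M)} {rb ra : List (Fin M)}
    (hrun : run M w = some (rb, ra)) : run M w ≠ none := by rw [hrun]; simp

lemma iterate_shiftMap (m : ℕ) (ω : ℤ → DyckSym M) :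
    (dyckShiftMap M)^[m] ω = fun i => ω (i + m) := by
  induction m generalizing ω with
  | zero => simp
  | succ m ih =>
      rw [Function.iterate_succ_apply, ih]
      funext i
      simp only [dyckShiftMap]
      congr 1
      push_cast
      ring

lemma cnt1 {n : ℕ} (s : Finset (Fin n)) :
    (Finset.univ.filter fun f : Fin n → Option (Fin M) =>
      (Finset.univ.filter fun i => (f i).isSome) = s).card = M ^ s.card := by
  classical
  rw [← Fintype.card_subtype]
  have e : {f : Fin n → Option (Fin M) // (Finset.univ.filter fun i => (f i).isSome) = s}
      ≃ ({i // i ∈ s} → Fin M) :=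
    { toFun := fun f i => (f.1 i.1).get (by
        have hf := f.2
        have hi : i.1 ∈ Finset.univ.filter fun j => ((f.1 j).isSome = true) := by
          rw [hf]; exact i.2
        simpa using hi)
      invFun := fun c => ⟨fun i => if h : i ∈ s then some (c ⟨i, h⟩) else none, by
        ext i
        simp only [Finset.mem_filter, Finset.mem_univ, true_and]
        constructor
        · intro hi
          by_contra hns
          rw [dif_neg hns] at hi
          simp at hi
        · intro hi
          rw [dif_pos hi]; simp⟩
      left_inv := by
        intro f
        apply Subtype.ext
        funext i
        by_cases h : i ∈ s
        · simp only [dif_pos h, Option.some_get]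
        · simp only [dif_neg h]
          have hf := f.2
          have : i ∉ Finset.univ.filter fun j => ((f.1 j).isSome = true) := by
            rw [hf]; exact h
          simp only [Finset.mem_filter, Finset.mem_univ, true_and] at this
          exact (Option.not_isSome_iff_eq_none.mp this).symm
      right_inv := by
        intro c
        funext i
        simp only [dif_pos i.2, Option.get_some, Subtype.coe_eta] }
  rw [Fintype.card_congr e, Fintype.card_fun, Fintype.card_coe, Fintype.card_fin]

lemma cnt2 {n : ℕ} (p : ℕ) :
    (Finset.univ.filter fun f : Fin n → Option (Fin M) =>
      (Finset.univ.filter fun i => (f i).isSome).card = p).card = n.choose p * M ^ p := by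
  classical
  rw [Finset.card_eq_sum_card_fiberwise
    (f := fun f : Fin n → Option (Fin M) => Finset.univ.filter fun i => (f i).isSome)
    (t := Finset.powersetCard p Finset.univ)
    (fun f hf => by
      beta_reduce
      rw [Finset.mem_coe, Finset.mem_powersetCard]
      exact ⟨Finset.subset_univ _, (Finset.mem_filter.mp (Finset.mem_coe.mp hf)).2⟩)]
  have hterm : ∀ s ∈ Finset.powersetCard p (Finset.univ : Finset (Fin n)),
      ((Finset.univ.filter fun f : Fin n → Option (Fin M) =>
        (Finset.univ.filter fun i => (f i).isSome).card = p).filter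
        (fun f => (Finset.univ.filter fun i => (f i).isSome) = s)).card = M ^ p := by
    intro s hs
    have hcard : s.card = p := (Finset.mem_powersetCard.mp hs).2
    have heq : ((Finset.univ.filter fun f : Fin n → Option (Fin M) =>
        (Finset.univ.filter fun i => (f i).isSome).card = p).filter
        (fun f => (Finset.univ.filter fun i => (f i).isSome) = s))
        = (Finset.univ.filter fun f : Fin n → Option (Fin M) =>
            (Finset.univ.filter fun i => (f i).isSome) = s) := by
      rw [Finset.filter_filter]
      apply Finset.filter_congr
      intro f _
      constructor
      · intro h; exact h.2
      · intro h; exact ⟨by rw [h, hcard], h⟩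
    rw [heq, cnt1, hcard]
  rw [Finset.sum_congr rfl hterm, Finset.sum_const, Finset.card_powersetCard,
    Finset.card_univ, Fintype.card_fin, smul_eq_mul]

lemma cnt3 (n : ℕ) :
    ((Finset.univ.filter fun f : Fin n → Option (Fin M) =>
      n < 2 * (Finset.univ.filter fun i => (f i).isSome).card).card : ℤ) =
    ∑ p ∈ (Finset.range (n + 1)).filter (fun p => n < 2 * p),
      (n.choose p : ℤ) * (M : ℤ) ^ p := by
  classical
  rw [Finset.card_eq_sum_card_fiberwise
    (f := fun f : Fin n → Option (Fin M) => (Finset.univ.filter fun i => (f i).isSome).card)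
    (t := (Finset.range (n + 1)).filter (fun p => n < 2 * p))
    (fun f hf => by
      beta_reduce
      rw [Finset.mem_coe, Finset.mem_filter, Finset.mem_range]
      refine ⟨Nat.lt_succ_of_le ?_, (Finset.mem_filter.mp (Finset.mem_coe.mp hf)).2⟩
      calc (Finset.univ.filter fun i => (f i).isSome).card
          ≤ (Finset.univ : Finset (Fin n)).card := Finset.card_filter_le _ _
        _ = n := by rw [Finset.card_univ, Fintype.card_fin])]
  push_cast
  apply Finset.sum_congr rfl
  intro p hp
  rw [Finset.mem_filter] at hp
  have heq : ((Finset.univ.filter fun f : Fin n → Option (Fin M) =>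
      n < 2 * (Finset.univ.filter fun i => (f i).isSome).card).filter
      (fun f => (Finset.univ.filter fun i => (f i).isSome).card = p))
      = (Finset.univ.filter fun f : Fin n → Option (Fin M) =>
          (Finset.univ.filter fun i => (f i).isSome).card = p) := by
    rw [Finset.filter_filter]
    apply Finset.filter_congr
    intro f _
    constructor
    · intro h; exact h.2
    · intro h; exact ⟨by rw [h]; exact hp.2, h⟩
  rw [heq, cnt2]
  push_cast
  ring

def perExtD (d : Fin M) (n : ℕ) (w : List (DyckSym M)) : ℤ → DyckSym M :=
  fun i => w.getD (i % (n : ℤ)).toNat (Sum.inl d)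

def GoodSetD (M n : ℕ) : Set (List (DyckSym M)) :=
  {w | w.length = n ∧ ∃ rb ra, run M w = some (rb, ra) ∧
    rb.length < ra.length ∧ rb.reverse <+: ra}

section Glue

variable {n : ℕ} (hn : 1 ≤ n) (d : Fin M)

lemma perExtD_per (w : List (DyckSym M)) (i : ℤ) :
    perExtD d n w (i + n) = perExtD d n w i := by
  unfold perExtD
  congr 2
  have h : i + (n : ℤ) = i + (n : ℤ) * 1 := by ring
  rw [h, Int.add_mul_emod_self_left]

include hn

lemma perExtD_small (w : List (DyckSym M)) (i : ℕ) (hi : i < n) :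
    perExtD d n w (i : ℤ) = w.getD i (Sum.inl d) := by
  unfold perExtD
  congr 1
  have h1 : ((i : ℤ) % (n : ℤ)) = i := Int.emod_eq_of_lt (by positivity) (by exact_mod_cast hi)
  rw [h1]
  simp

lemma seg_perExtD (w : List (DyckSym M)) (hlen : w.length = n) :
    seg (perExtD d n w) 0 n = w := by
  have h1 : seg (perExtD d n w) 0 n = (List.range n).map (fun i : ℕ => w.getD i (Sum.inl d)) := by
    unfold seg
    apply List.map_congr_left
    intro i hi
    rw [List.mem_range] at hi
    rw [zero_add]
    exact perExtD_small hn d w i hi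
  rw [h1, map_range_getD _ _ _ (le_of_eq hlen.symm), ← hlen, List.take_length]

lemma seg_getD (ω : ℤ → DyckSym M) (t : ℕ) (ht : t < n) (j : DyckSym M) :
    (seg ω 0 n).getD t j = ω t := by
  unfold seg
  rw [List.getD_eq_getElem _ _ (by simpa using ht)]
  simp

lemma perExtD_eq_self {ω : ℤ → DyckSym M} (hper : ∀ i, ω (i + (n : ℤ)) = ω i) :
    perExtD d n (seg ω 0 n) = ω := by
  funext i
  have hnne : (n : ℤ) ≠ 0 := Int.natCast_ne_zero.mpr (by omega)
  have h0 : (0 : ℤ) ≤ i % n := Int.emod_nonneg i hnne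
  have h1 : i % (n : ℤ) < n := Int.emod_lt_of_pos i (by exact_mod_cast hn)
  have h2 : ((i % (n : ℤ)).toNat : ℤ) = i % n := Int.toNat_of_nonneg h0
  have h3 : (i % (n : ℤ)).toNat < n := by omega
  have h4 : perExtD d n (seg ω 0 n) i = (seg ω 0 n).getD (i % (n : ℤ)).toNat (Sum.inl d) := rfl
  rw [h4, seg_getD hn _ _ h3]
  rw [h2]
  have h5 := per_shift hper (i / n) (i % n)
  have h6 : i % (n : ℤ) + (i / n) * n = i := by
    rw [mul_comm]
    exact Int.emod_add_mul_ediv i n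
  rw [h6] at h5
  exact h5.symm

end Glue

lemma listH_of_run {w : List (DyckSym M)} {rb ra : List (Fin M)}
    (hrun : run M w = some (rb, ra)) : listH w = (ra.length : ℤ) - rb.length := by
  have hs' : w.foldl (step M) (some ([], [])) = some (rb, ra) := hrun
  have := listH_run w [] [] rb ra hs'
  simpa using this

lemma perA_sub {n : ℕ} (hn : 1 ≤ n) (d : Fin M) {ω : ℤ → DyckSym M}
    (hω : ω ∈ dyckPerA M n) : ∃ w ∈ GoodSetD M n, perExtD d n w = ω := by
  obtain ⟨⟨hshift, hfix⟩, hH⟩ := hω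
  have hper : ∀ i, ω (i + (n : ℤ)) = ω i := by
    rw [iterate_shiftMap] at hfix
    exact fun i => congrFun hfix i
  set w := seg ω 0 n with hw
  have hlen : w.length = n := by simp [hw, seg]
  have hrun_ne : run M w ≠ none := by
    have h1 : dyckRed M (dyckSubword M ω 0 n) ≠ none := hshift 0 n (by exact_mod_cast hn)
    rw [Ne, dyckRed_eq_none_iff, subword_eq_seg] at h1
    have h2 : ((n : ℤ) - 0 + 1).toNat = n + 1 := by omega
    rw [h2] at h1
    have h3 : seg ω 0 (n + 1) = [] ++ seg ω 0 n ++ seg ω (0 + (n : ℕ)) 1 := by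
      rw [List.nil_append, ← seg_add]
    rw [h3] at h1
    exact run_factor _ _ _ h1
  obtain ⟨s, hs⟩ := Option.ne_none_iff_exists'.mp hrun_ne
  obtain ⟨rb, ra⟩ := s
  have hlistH : listH w = (ra.length : ℤ) - rb.length := listH_of_run hs
  have hH' : 0 < (ra.length : ℤ) - rb.length := by
    rw [← hlistH, hw, ← dyckH_eq_listH]
    exact hH
  have hlt : rb.length < ra.length := by omega
  have hs' : w.foldl (step M) (some ([], [])) = some (rb, ra) := hs
  have hpre : rb.reverse <+: ra := by
    by_contra hnp
    obtain ⟨Y, Z, rest, y, z, h1, h2, h3⟩ :=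
      exists_mismatch rb.reverse ra (by rw [List.length_reverse]; omega) hnp
    have hfail := comp_fail w [] [] rb rest rb Y Z y z rb ra hs' (by simp) h1 h3
    rw [List.nil_append, ← h2] at hfail
    have hww : run M (w ++ w) = none := by
      unfold run
      rw [List.foldl_append, hs']
      exact hfail
    have hsub : dyckSubword M ω 0 (2 * (n : ℤ) - 1) = w ++ w := by
      rw [subword_eq_seg]
      have h4 : (2 * (n : ℤ) - 1 - 0 + 1).toNat = n + n := by omega
      rw [h4, seg_add]
      congr 1
      have h5 : (0 : ℤ) + (n : ℕ) = 0 + (1 : ℤ) * n := by push_cast; ring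
      rw [h5, seg_per_shift hper]
    have hne := hshift 0 (2 * (n : ℤ) - 1)
      (by have : (1 : ℤ) ≤ (n : ℤ) := by exact_mod_cast hn
          omega)
    rw [Ne, dyckRed_eq_none_iff, hsub] at hne
    exact hne hww
  exact ⟨w, ⟨hlen, rb, ra, hs, hlt, hpre⟩, perExtD_eq_self hn d hper⟩

lemma perA_sup {n : ℕ} (hn : 1 ≤ n) (d : Fin M) {w : List (DyckSym M)}
    (hw : w ∈ GoodSetD M n) : perExtD d n w ∈ dyckPerA M n := by
  obtain ⟨hlen, rb, ra, hrun, hlt, hpre⟩ := hw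
  set ω := perExtD d n w with hω
  have hper : ∀ i, ω (i + (n : ℤ)) = ω i := fun i => perExtD_per d w i
  have hseg : seg ω 0 n = w := seg_perExtD hn d w hlen
  refine ⟨⟨?_, ?_⟩, ?_⟩
  · exact mem_shiftSet hn hper (by rw [hseg]; exact hrun) hpre
  · rw [iterate_shiftMap]
    funext i
    exact hper i
  · rw [dyckH_eq_listH, hseg, listH_of_run hrun]
    omega

lemma perA_eq_image {n : ℕ} (hn : 1 ≤ n) (d : Fin M) :
    dyckPerA M n = perExtD d n '' GoodSetD M n := by
  ext ω
  constructor
  · intro hω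
    obtain ⟨w, hw, hwe⟩ := perA_sub hn d hω
    exact ⟨w, hw, hwe⟩
  · rintro ⟨w, hw, rfl⟩
    exact perA_sup hn d hw

lemma perExtD_injOn {n : ℕ} (hn : 1 ≤ n) (d : Fin M) :
    Set.InjOn (perExtD d n) (GoodSetD M n) := by
  intro w hw w' hw' heq
  apply List.ext_getElem (by rw [hw.1, hw'.1])
  intro i h1 h2
  have hi : i < n := hw.1 ▸ h1
  have e1 := perExtD_small hn d w i hi
  have e2 := perExtD_small hn d w' i hi
  have e3 : w.getD i (Sum.inl d) = w'.getD i (Sum.inl d) := by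
    rw [← e1, ← e2, heq]
  rwa [List.getD_eq_getElem _ _ h1, List.getD_eq_getElem _ _ h2] at e3

def gD (d : Fin M) (n : ℕ) (w : List (DyckSym M)) : Fin n → Option (Fin M) :=
  fun i => Sum.getLeft? (w.getD (i : ℕ) (Sum.inl d))

def TD (M n : ℕ) : Finset (Fin n → Option (Fin M)) :=
  Finset.univ.filter fun f => n < 2 * (Finset.univ.filter fun i => (f i).isSome).card

lemma gD_injOn {n : ℕ} (d : Fin M) : Set.InjOn (gD d n) (GoodSetD M n) := by
  intro w hw w' hw' heq
  apply good_unique d ?_ hw.2 hw'.2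
  apply List.ext_getElem (by simp [hw.1, hw'.1])
  intro i h1 h2
  have hi : i < n := by
    rw [List.length_map, hw.1] at h1
    exact h1
  have hi1 : i < w.length := by rw [hw.1]; exact hi
  have hi2 : i < w'.length := by rw [hw'.1]; exact hi
  rw [List.getElem_map, List.getElem_map]
  have e1 : gD d n w ⟨i, hi⟩ = Sum.getLeft? (w.getD i (Sum.inl d)) := rfl
  have e2 : gD d n w' ⟨i, hi⟩ = Sum.getLeft? (w'.getD i (Sum.inl d)) := rfl
  have := congrFun heq ⟨i, hi⟩
  rw [e1, e2, List.getD_eq_getElem _ _ hi1, List.getD_eq_getElem _ _ hi2] at this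
  exact this

lemma gD_image {n : ℕ} (d : Fin M) : gD d n '' GoodSetD M n = ↑(TD M n) := by
  ext f
  simp only [TD, Finset.coe_filter, Set.mem_setOf_eq, Finset.mem_univ, true_and]
  constructor
  · rintro ⟨w, ⟨hlen, rb, ra, hrun, hlt, hpre⟩, rfl⟩
    have hval : ∀ i : Fin n, (w.map Sum.getLeft?).getD (i : ℕ) none = gD d n w i :=
      fun i => getD_map_getLeft? w (i : ℕ) (by rw [hlen]; exact i.2) (Sum.inl d)
    have hcard := card_filter_isSome (gD d n w) (w.map Sum.getLeft?)
      (by rw [List.length_map, hlen]) hval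
    have hcount : ((Finset.univ.filter fun i : Fin n => ((gD d n w) i).isSome).card : ℤ)
        = (w.countP (fun x => x.isLeft) : ℤ) := by
      rw [hcard, countP_isLeft_eq]
    have hlH : listH w = (ra.length : ℤ) - rb.length := listH_of_run hrun
    have hlE := listH_eq w
    rw [hlen] at hlE
    omega
  · intro hf
    set F := List.ofFn f with hF
    have hFlen : F.length = n := List.length_ofFn
    have hFval : ∀ i : Fin n, F.getD (i : ℕ) none = f i := by
      intro i
      rw [List.getD_eq_getElem _ _ (by rw [hFlen]; exact i.2), List.getElem_ofFn]
    have hcard := card_filter_isSome f F hFlen hFval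
    have hpos : (F.length : ℤ) < 2 * F.countP (fun o => o.isSome) := by
      rw [hFlen, ← hcard]
      exact_mod_cast hf
    obtain ⟨w, hwF, rb, ra, hrun, hlt, hpre⟩ := good_exists d F hpos
    have hwlen : w.length = n := by
      have := congrArg List.length hwF
      rw [List.length_map] at this
      rw [this, hFlen]
    refine ⟨w, ⟨hwlen, rb, ra, hrun, hlt, hpre⟩, ?_⟩
    funext i
    have h1 := getD_map_getLeft? w (i : ℕ) (by rw [hwlen]; exact i.2) (Sum.inl d)
    have h2 : gD d n w i = Sum.getLeft? (w.getD (i : ℕ) (Sum.inl d)) := rfl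
    rw [h2, ← h1, hwF, hFval]

end DyckAux

open DyckAux in
theorem stmt1 (M : ℕ) (hM : 2 ≤ M) (n : ℕ) :
    ((dyckPerA M n).ncard : ℤ) =
      ((M : ℤ) + 1) ^ n - ∑ i ∈ Finset.range (n / 2 + 1), (n.choose i : ℤ) * (M : ℤ) ^ i := by
  classical
  rcases Nat.eq_zero_or_pos n with hn0 | hn
  · subst hn0
    have hempty : dyckPerA M 0 = ∅ := by
      apply Set.eq_empty_iff_forall_notMem.mpr
      intro ω hω
      have h := hω.2
      simp [dyckH] at h
    rw [hempty, Set.ncard_empty]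
    rw [Nat.zero_div, zero_add, Finset.sum_range_one]
    simp
  · have hMpos : 0 < M := by omega
    set d : Fin M := ⟨0, hMpos⟩ with hd
    have h1 : ((dyckPerA M n).ncard : ℤ) = ((GoodSetD M n).ncard : ℤ) := by
      rw [perA_eq_image hn d, Set.ncard_image_of_injOn (perExtD_injOn hn d)]
    have h2 : ((GoodSetD M n).ncard : ℤ) = ((TD M n).card : ℤ) := by
      rw [← Set.ncard_coe_finset (TD M n), ← gD_image d,
        Set.ncard_image_of_injOn (gD_injOn d)]
    rw [h1, h2]
    rw [show (TD M n) = Finset.univ.filter fun f : Fin n → Option (Fin M) =>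
      n < 2 * (Finset.univ.filter fun i => (f i).isSome).card from rfl]
    rw [cnt3 n]
    have hsetEq : (Finset.range (n + 1)).filter (fun p => n < 2 * p)
        = Finset.Ico (n / 2 + 1) (n + 1) := by
      ext a
      simp only [Finset.mem_filter, Finset.mem_range, Finset.mem_Ico]
      omega
    rw [hsetEq, Finset.sum_Ico_eq_sub _ (by omega : n / 2 + 1 ≤ n + 1)]
    have hbinom : ((M : ℤ) + 1) ^ n
        = ∑ i ∈ Finset.range (n + 1), (n.choose i : ℤ) * (M : ℤ) ^ i := by
      rw [add_pow]
      apply Finset.sum_congr rfl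
      intro i _
      rw [one_pow, mul_one, mul_comm]
    rw [hbinom]
end

section
/- For M ≥ 2, for all sufficiently large n, the number of period-n points of the Dyck shift with H_n > 0 satisfies (1/3)(M+1)^n ≤ #Per_{α,n}(σ) < (M+1)^n. -/
namespace DyckProof

/-- sign of a pattern value -/
def sg (b : Bool) : ℤ := if b then 1 else -1

/-- height function of a bi-infinite ±1 pattern -/
noncomputable def htP (P : ℤ → Bool) (i : ℤ) : ℤ :=
  (∑ t ∈ Finset.Ico (0:ℤ) i, sg (P t)) - ∑ t ∈ Finset.Ico i (0:ℤ), sg (P t)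

lemma htP_zero (P : ℤ → Bool) : htP P 0 = 0 := by simp [htP]

lemma sum_Ico_split (f : ℤ → ℤ) {a b c : ℤ} (h1 : a ≤ b) (h2 : b ≤ c) :
    ((∑ t ∈ Finset.Ico a b, f t) + ∑ t ∈ Finset.Ico b c, f t) = ∑ t ∈ Finset.Ico a c, f t := by
  rw [← Finset.sum_union (Finset.Ico_disjoint_Ico_consecutive a b c)]
  congr 1
  exact Finset.Ico_union_Ico_eq_Ico h1 h2

lemma Ico_singleton (a : ℤ) : Finset.Ico a (a+1) = {a} := by
  ext x; simp [Finset.mem_Ico]; omega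

lemma sum_Ico_single (f : ℤ → ℤ) (a : ℤ) : (∑ t ∈ Finset.Ico a (a+1), f t) = f a := by
  rw [Ico_singleton]; simp

lemma htP_sub (P : ℤ → Bool) {i j : ℤ} (h : i ≤ j) :
    htP P j - htP P i = ∑ t ∈ Finset.Ico i j, sg (P t) := by
  rcases le_total 0 i with h0i | hi0
  · have h0j : (0:ℤ) ≤ j := le_trans h0i h
    rw [htP, htP, Finset.Ico_eq_empty (show ¬ j < 0 by omega),
      Finset.Ico_eq_empty (show ¬ i < 0 by omega)]
    simp only [Finset.sum_empty, sub_zero]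
    have := sum_Ico_split (fun t => sg (P t)) h0i h
    linarith
  · rcases le_total 0 j with h0j | hj0
    · rw [htP, htP, Finset.Ico_eq_empty (show ¬ j < 0 by omega),
        Finset.Ico_eq_empty (show ¬ (0:ℤ) < i by omega)]
      simp only [Finset.sum_empty, sub_zero, zero_sub]
      have := sum_Ico_split (fun t => sg (P t)) hi0 h0j
      linarith
    · rw [htP, htP, Finset.Ico_eq_empty (show ¬ (0:ℤ) < j by omega),
        Finset.Ico_eq_empty (show ¬ (0:ℤ) < i by omega)]
      simp only [Finset.sum_empty, zero_sub]
      have := sum_Ico_split (fun t => sg (P t)) h hj0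
      linarith

lemma htP_succ (P : ℤ → Bool) (i : ℤ) : htP P (i+1) = htP P i + sg (P i) := by
  have h := htP_sub P (show i ≤ i + 1 by omega)
  rw [sum_Ico_single] at h
  omega

lemma htP_succ_true {P : ℤ → Bool} {i : ℤ} (h : P i = true) : htP P (i+1) = htP P i + 1 := by
  rw [htP_succ, h]; rfl

lemma htP_succ_false {P : ℤ → Bool} {i : ℤ} (h : P i = false) : htP P (i+1) = htP P i - 1 := by
  rw [htP_succ, h]; simp [sg]; ring

lemma htP_step (P : ℤ → Bool) (i : ℤ) : htP P (i+1) = htP P i + 1 ∨ htP P (i+1) = htP P i - 1 := by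
  cases h : P i
  · right; exact htP_succ_false h
  · left; exact htP_succ_true h

/-- sums over shifted length-n windows of an n-periodic pattern agree -/
lemma htP_window (P : ℤ → Bool) (n : ℕ) (hP : ∀ i : ℤ, P (i + n) = P i) (i : ℤ) :
    htP P (i + n) - htP P i = htP P n := by
  have key : ∀ i : ℤ, (∑ t ∈ Finset.Ico i (i + n), sg (P t)) = ∑ t ∈ Finset.Ico (0:ℤ) n, sg (P t) := by
    intro i
    induction i using Int.induction_on with
    | zero => simp
    | succ k ih =>
        rw [← ih]
        have e1 : (∑ t ∈ Finset.Ico (k:ℤ) (k+1), sg (P t)) + ∑ t ∈ Finset.Ico ((k:ℤ)+1) ((k+1)+n), sg (P t)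
            = ∑ t ∈ Finset.Ico (k:ℤ) ((k+1)+n), sg (P t) := sum_Ico_split _ (by omega) (by omega)
        have e2 : (∑ t ∈ Finset.Ico (k:ℤ) (k+n), sg (P t)) + ∑ t ∈ Finset.Ico ((k:ℤ)+n) ((k:ℤ)+n+1), sg (P t)
            = ∑ t ∈ Finset.Ico (k:ℤ) ((k+1)+n), sg (P t) := by
          rw [show ((k:ℤ)+1)+n = (k:ℤ)+n+1 by ring]
          exact sum_Ico_split _ (by omega) (by omega)
        have s1 : (∑ t ∈ Finset.Ico (k:ℤ) (k+1), sg (P t)) = sg (P k) := sum_Ico_single _ _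
        have s2 : (∑ t ∈ Finset.Ico ((k:ℤ)+n) ((k:ℤ)+n+1), sg (P t)) = sg (P ((k:ℤ) + n)) := sum_Ico_single _ _
        rw [hP k] at s2
        linarith
    | pred k ih =>
        rw [← ih]
        have e1 : (∑ t ∈ Finset.Ico (-(k:ℤ)-1) (-(k:ℤ)-1+1), sg (P t)) + ∑ t ∈ Finset.Ico (-(k:ℤ)-1+1) (-(k:ℤ)+n), sg (P t)
            = ∑ t ∈ Finset.Ico (-(k:ℤ)-1) (-(k:ℤ)+n), sg (P t) := sum_Ico_split _ (by omega) (by omega)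
        have e2 : (∑ t ∈ Finset.Ico (-(k:ℤ)-1) (-(k:ℤ)-1+n), sg (P t)) + ∑ t ∈ Finset.Ico (-(k:ℤ)-1+n) ((-(k:ℤ)-1+n)+1), sg (P t)
            = ∑ t ∈ Finset.Ico (-(k:ℤ)-1) (-(k:ℤ)+n), sg (P t) := by
          rw [show (-(k:ℤ)+n) = (-(k:ℤ)-1+n)+1 by ring]
          exact sum_Ico_split _ (by omega) (by omega)
        have s1 : (∑ t ∈ Finset.Ico (-(k:ℤ)-1) (-(k:ℤ)-1+1), sg (P t)) = sg (P (-(k:ℤ)-1)) := sum_Ico_single _ _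
        have s2 : (∑ t ∈ Finset.Ico (-(k:ℤ)-1+n) ((-(k:ℤ)-1+n)+1), sg (P t)) = sg (P (-(k:ℤ)-1+n)) := sum_Ico_single _ _
        rw [hP (-(k:ℤ)-1)] at s2
        have e3 : Finset.Ico (-(k:ℤ)-1+1) (-(k:ℤ)+n) = Finset.Ico (-(k:ℤ)) (-(k:ℤ)+n) := by
          congr 1; ring
        rw [e3] at e1
        linarith
  have h2 := htP_sub P (show i ≤ i + n by omega)
  have h3 := htP_sub P (show (0:ℤ) ≤ (n:ℤ) by omega)
  rw [htP_zero] at h3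
  rw [key] at h2
  omega

lemma htP_add_mul (P : ℤ → Bool) (n : ℕ) (hP : ∀ i : ℤ, P (i + n) = P i) (i : ℤ) (k : ℤ) :
    htP P (i + k * n) = htP P i + k * htP P n := by
  induction k using Int.induction_on with
  | zero => simp
  | succ m ih =>
      have w := htP_window P n hP (i + m * n)
      have e : i + (m:ℤ) * n + n = i + ((m:ℤ)+1) * n := by ring
      rw [e] at w
      linear_combination w + ih
  | pred m ih =>
      have w := htP_window P n hP (i + (-(m:ℤ)-1) * n)
      have e : i + (-(m:ℤ)-1) * n + n = i + (-(m:ℤ)) * n := by ring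
      rw [e] at w
      linear_combination ih - w

/-- `q` is the matching opener position of the closer at `i`. -/
def IsMatch (P : ℤ → Bool) (i q : ℤ) : Prop :=
  q < i ∧ htP P q = htP P (i+1) ∧ ∀ z, z < i → htP P z = htP P (i+1) → z ≤ q

lemma IsMatch.unique {P : ℤ → Bool} {i q q' : ℤ} (h : IsMatch P i q) (h' : IsMatch P i q') :
    q = q' :=
  le_antisymm (h'.2.2 q h.1 h.2.1) (h.2.2 q' h'.1 h'.2.1)

/-- existence of the match for a closer, under periodicity with positive drift -/
lemma exists_match {P : ℤ → Bool} {n : ℕ} (hP : ∀ i : ℤ, P (i + n) = P i)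
    (hn : 0 < n) (hd : 0 < htP P n) {i : ℤ} (hi : P i = false) :
    ∃ q, IsMatch P i q := by
  have hstep : htP P (i+1) = htP P i - 1 := htP_succ_false hi
  -- the greatest q ≤ i with htP P q ≤ htP P (i+1)
  obtain ⟨q, ⟨hqi, hqle⟩, hgr⟩ := Int.exists_greatest_of_bdd
    (P := fun z => z ≤ i ∧ htP P z ≤ htP P (i+1))
    ⟨i, fun z hz => hz.1⟩
    (by
      refine ⟨i + 1 - n, by omega, ?_⟩
      have := htP_add_mul P n hP (i + 1 - n) 1
      simp only [one_mul] at this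
      rw [show i + 1 - n + n = i + 1 by ring] at this
      omega)
  have hq_eq : htP P q = htP P (i+1) := by
    by_contra hne
    have hlt : htP P q < htP P (i+1) := lt_of_le_of_ne hqle hne
    have hqi' : q < i := by
      rcases lt_or_eq_of_le hqi with h | h
      · exact h
      · subst h; omega
    have : q + 1 ≤ i ∧ htP P (q+1) ≤ htP P (i+1) := by
      constructor
      · omega
      · rcases htP_step P q with h | h <;> omega
    have := hgr (q+1) this
    omega
  have hqi' : q < i := by
    rcases lt_or_eq_of_le hqi with h | h
    · exact h
    · subst h; omega
  exact ⟨q, hqi', hq_eq, fun z hz hze => hgr z ⟨le_of_lt hz, le_of_eq hze⟩⟩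

/-- strictly above the base height: if no return to base level strictly inside, heights stay above -/
lemma strict_above {P : ℤ → Bool} {j e : ℤ} (hopen : P j = true)
    (hz : ∀ z, j < z → z < e → htP P (z+1) ≠ htP P j) :
    ∀ s, j < s → s ≤ e → htP P j < htP P s := by
  by_contra hcon
  push_neg at hcon
  obtain ⟨s, ⟨hjs, hse, hle⟩, hleast⟩ := Int.exists_least_of_bdd
    (P := fun s => j < s ∧ s ≤ e ∧ htP P s ≤ htP P j)
    ⟨j + 1, fun z hz => by omega⟩
    (by obtain ⟨s, h1, h2, h3⟩ := hcon; exact ⟨s, h1, h2, h3⟩)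
  have hj1 : htP P (j+1) = htP P j + 1 := htP_succ_true hopen
  rcases eq_or_lt_of_le (show j + 1 ≤ s by omega) with h | h
  · rw [← h] at hle; omega
  · -- s ≥ j + 2 ; htP (s-1) > htP j by leastness
    have hprev : ¬ (j < s - 1 ∧ s - 1 ≤ e ∧ htP P (s-1) ≤ htP P j) := by
      intro hc
      have := hleast _ hc
      omega
    have hs1 : htP P j < htP P (s-1) := by
      by_contra hcc
      exact hprev ⟨by omega, by omega, by omega⟩
    have hstep := htP_step P (s-1)
    rw [show s - 1 + 1 = s by ring] at hstep
    have hs_eq : htP P s = htP P j := by omega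
    exact hz (s-1) (by omega) (by omega) (by rw [show s - 1 + 1 = s by ring]; omega)

/-- a least return to base level after an opener is its matching closer -/
lemma least_return_match {P : ℤ → Bool} {j i₀ : ℤ} (hopen : P j = true)
    (hji : j < i₀) (hret : htP P (i₀+1) = htP P j)
    (hz : ∀ z, j < z → z < i₀ → htP P (z+1) ≠ htP P j) :
    IsMatch P i₀ j := by
  refine ⟨hji, hret.symm, ?_⟩
  intro z hzi hze
  by_contra hcon
  push_neg at hcon
  -- j < z < i₀ with htP z = htP j
  have hz_eq : htP P z = htP P j := by rw [hze, hret]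
  have hj1 : htP P (j+1) = htP P j + 1 := htP_succ_true hopen
  have hzj1 : z ≠ j + 1 := by
    intro h; rw [h] at hz_eq; omega
  have : j < z - 1 := by omega
  exact hz (z-1) this (by omega) (by rw [show z - 1 + 1 = z by ring]; omega)

/-- match positions shift by the period -/
lemma IsMatch.shift {P : ℤ → Bool} {n : ℕ} (hP : ∀ i : ℤ, P (i + n) = P i)
    {i q : ℤ} (h : IsMatch P i q) : IsMatch P (i + n) (q + n) := by
  have hw : ∀ z : ℤ, htP P (z + n) = htP P z + htP P n := fun z => by
    have := htP_window P n hP z; omega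
  refine ⟨by have := h.1; omega, ?_, ?_⟩
  · rw [hw q, show i + n + 1 = (i + 1) + n by ring, hw (i+1), h.2.1]
  · intro z hz hze
    have hz' : htP P (z - n) = htP P (i+1) := by
      have := hw (z - n)
      rw [show z - n + n = z by ring] at this
      rw [show i + n + 1 = (i + 1) + n by ring, hw (i+1)] at hze
      omega
    have := h.2.2 (z - n) (by have := h.1; omega) hz'
    omega


section Lists
variable {M : ℕ}

abbrev F (M : ℕ) : Option (List (DyckSym M)) → List (DyckSym M) → Option (List (DyckSym M)) :=
  List.foldl (dyckRedStep M)

lemma step_none (x : DyckSym M) : dyckRedStep M none x = none := by cases x <;> rfl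

lemma F_none (w : List (DyckSym M)) : F M none w = none := by
  induction w with
  | nil => rfl
  | cons x w ih => simp only [F, List.foldl_cons, step_none]; exact ih

lemma F_cons (l : Option (List (DyckSym M))) (x : DyckSym M) (w : List (DyckSym M)) :
    F M l (x :: w) = F M (dyckRedStep M l x) w := rfl

lemma F_append (l : Option (List (DyckSym M))) (u v : List (DyckSym M)) :
    F M l (u ++ v) = F M (F M l u) v := List.foldl_append ..

lemma step_inl (l : List (DyckSym M)) (a : Fin M) :
    dyckRedStep M (some l) (Sum.inl a) = some (l ++ [Sum.inl a]) := rfl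

lemma step_inr_concat_inl (l : List (DyckSym M)) (a b : Fin M) :
    dyckRedStep M (some (l ++ [Sum.inl a])) (Sum.inr b)
      = if a = b then some l else none := by
  show (match (l ++ [Sum.inl a]).getLast? with
      | some (Sum.inl j) => if j = b then some (l ++ [Sum.inl a]).dropLast else none
      | _ => some ((l ++ [Sum.inl a]) ++ [Sum.inr b])) = _
  rw [List.getLast?_concat, List.dropLast_concat]

lemma step_inr_nil (b : Fin M) :
    dyckRedStep M (some ([] : List (DyckSym M))) (Sum.inr b) = some [Sum.inr b] := rfl

lemma step_inr_concat_inr (l : List (DyckSym M)) (c b : Fin M) :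
    dyckRedStep M (some (l ++ [Sum.inr c])) (Sum.inr b)
      = some ((l ++ [Sum.inr c]) ++ [Sum.inr b]) := by
  show (match (l ++ [Sum.inr c]).getLast? with
      | some (Sum.inl j) => if j = b then some (l ++ [Sum.inr c]).dropLast else none
      | _ => some ((l ++ [Sum.inr c]) ++ [Sum.inr b])) = _
  rw [List.getLast?_concat]

/-- Lemma L: a closer at the bottom of the stack is inert -/
lemma bottom_closer_inert (w : List (DyckSym M)) : ∀ (l : List (DyckSym M)) (b : Fin M),
    F M (some (Sum.inr b :: l)) w = Option.map (List.cons (Sum.inr b)) (F M (some l) w) := by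
  induction w with
  | nil => intro l b; rfl
  | cons x w ih =>
    intro l b
    rcases x with a | c
    · rw [F_cons, F_cons, step_inl, step_inl, List.cons_append]
      exact ih _ b
    · rcases List.eq_nil_or_concat l with rfl | ⟨l', y, rfl⟩
      · rw [F_cons, F_cons, step_inr_nil,
          show (Sum.inr b :: ([] : List (DyckSym M))) = [] ++ [Sum.inr b] by simp,
          step_inr_concat_inr]
        simpa using ih [Sum.inr c] b
      · simp only [List.concat_eq_append]
        rcases y with a | c'
        · rw [F_cons, F_cons, step_inr_concat_inl,
            show (Sum.inr b :: (l' ++ [Sum.inl a])) = (Sum.inr b :: l') ++ [Sum.inl a] by simp,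
            step_inr_concat_inl]
          by_cases hab : a = c
          · simp only [hab, if_pos rfl]
            exact ih _ b
          · simp only [if_neg hab, F_none, Option.map_none]
        · rw [F_cons, F_cons, step_inr_concat_inr,
            show (Sum.inr b :: (l' ++ [Sum.inr c'])) = (Sum.inr b :: l') ++ [Sum.inr c'] by simp,
            step_inr_concat_inr]
          have := ih ((l' ++ [Sum.inr c']) ++ [Sum.inr c]) b
          rw [← this]
          congr 1

end Lists

section Subword
variable {M : ℕ} (ω : ℤ → DyckSym M)

lemma subword_def (j k : ℤ) :
    dyckSubword M ω j k = (List.range (k - j + 1).toNat).map (fun i : ℕ => ω (j + (i:ℤ))) := by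
  unfold dyckSubword
  rw [show (do let a ← List.range (k - j + 1).toNat; pure ((a:ℤ))) = (List.range (k - j + 1).toNat).flatMap (fun a : ℕ => [(a:ℤ)]) from rfl,
     ← List.map_eq_flatMap, List.map_map]
  rfl

lemma subword_empty {j k : ℤ} (h : k < j) : dyckSubword M ω j k = [] := by
  rw [subword_def, show (k - j + 1).toNat = 0 by omega]
  rfl

lemma subword_cons {j k : ℤ} (h : j ≤ k) :
    dyckSubword M ω j k = ω j :: dyckSubword M ω (j+1) k := by
  rw [subword_def, subword_def,
    show (k - j + 1).toNat = (k - (j+1) + 1).toNat + 1 by omega,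
    List.range_succ_eq_map, List.map_cons, List.map_map]
  congr 1
  · norm_num
  · apply List.map_congr_left
    intro i _
    simp only [Function.comp]
    congr 1
    push_cast
    ring

lemma subword_single (j : ℤ) : dyckSubword M ω j j = [ω j] := by
  rw [subword_cons ω le_rfl, subword_empty ω (by omega)]

lemma subword_append {j m k : ℤ} (h1 : j ≤ m) (h2 : m ≤ k + 1) :
    dyckSubword M ω j k = dyckSubword M ω j (m-1) ++ dyckSubword M ω m k := by
  rw [subword_def, subword_def, subword_def,
    show (k - j + 1).toNat = (m-1 - j + 1).toNat + (k - m + 1).toNat by omega,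
    List.range_add, List.map_append, List.map_map]
  congr 1
  apply List.map_congr_left
  intro i _
  simp only [Function.comp]
  congr 1
  push_cast
  omega

end Subword


section Core
variable {M : ℕ}

def pat (ω : ℤ → DyckSym M) : ℤ → Bool := fun i => (ω i).isLeft

lemma pat_true {ω : ℤ → DyckSym M} {i : ℤ} (h : pat ω i = true) : ∃ a, ω i = Sum.inl a := by
  unfold pat at h
  rcases hx : ω i with a | b
  · exact ⟨a, rfl⟩
  · rw [hx] at h; simp at h

lemma pat_false {ω : ℤ → DyckSym M} {i : ℤ} (h : pat ω i = false) : ∃ b, ω i = Sum.inr b := by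
  unfold pat at h
  rcases hx : ω i with a | b
  · rw [hx] at h; simp at h
  · exact ⟨b, rfl⟩

lemma lemK (ω : ℤ → DyckSym M) : ∀ len : ℕ, ∀ j k : ℤ, j ≤ k + 1 → (k + 1 - j).toNat = len →
    ∀ (l m : List (DyckSym M)), (∀ x ∈ m, x.isLeft = true) →
    (∀ s, j ≤ s → s ≤ k+1 → htP (pat ω) j ≤ htP (pat ω) s + m.length) →
    F M (some (l ++ m)) (dyckSubword M ω j k) ≠ none →
    ∃ m', (∀ x ∈ m', x.isLeft = true) ∧
      ((m'.length : ℤ) = m.length + (htP (pat ω) (k+1) - htP (pat ω) j)) ∧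
      F M (some (l ++ m)) (dyckSubword M ω j k) = some (l ++ m') := by
  intro len
  induction len with
  | zero =>
    intro j k hjk h0 l m hm hpre hne
    have hj : j = k + 1 := by omega
    rw [subword_empty ω (by omega)]
    refine ⟨m, hm, by rw [hj]; ring, rfl⟩
  | succ len ih =>
    intro j k hjk hlen l m hm hpre hne
    have hjk' : j ≤ k := by omega
    rw [subword_cons ω hjk'] at hne ⊢
    rcases hx : pat ω j with _ | _
    · -- closer
      obtain ⟨b, hb⟩ := pat_false hx
      have hfall : htP (pat ω) (j+1) = htP (pat ω) j - 1 := htP_succ_false hx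
      have hmlen : 1 ≤ m.length := by
        have := hpre (j+1) (by omega) (by omega)
        rw [hfall] at this
        omega
    -- m = m₀ ++ [inl c]
      rcases List.eq_nil_or_concat m with rfl | ⟨m₀, y, rfl⟩
      · simp at hmlen
      · simp only [List.concat_eq_append] at *
        have hy : y.isLeft = true := hm y (by simp)
        obtain ⟨c, rfl⟩ : ∃ c, y = Sum.inl c := by
          rcases y with c | c
          · exact ⟨c, rfl⟩
          · simp at hy
        rw [hb, F_cons, ← List.append_assoc, step_inr_concat_inl] at hne ⊢
        by_cases hcb : c = b
        · rw [if_pos hcb] at hne ⊢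
          have := ih (j+1) k (by omega) (by omega) l m₀
            (fun x hx => hm x (by simp [hx]))
            (by
              intro s h1 h2
              have := hpre s (by omega) h2
              simp only [List.length_append, List.length_singleton] at this
              push_cast at this ⊢
              omega)
            hne
          obtain ⟨m', h1, h2, h3⟩ := this
          refine ⟨m', h1, ?_, h3⟩
          simp only [List.length_append, List.length_singleton]
          push_cast
          omega
        · rw [if_neg hcb] at hne
          exact absurd (F_none _) hne
    · -- opener
      obtain ⟨a, ha⟩ := pat_true hx
      have hrise : htP (pat ω) (j+1) = htP (pat ω) j + 1 := htP_succ_true hx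
      rw [ha, F_cons, step_inl, List.append_assoc] at hne ⊢
      have := ih (j+1) k (by omega) (by omega) l (m ++ [Sum.inl a])
        (by
          intro x hxm
          rcases List.mem_append.mp hxm with h | h
          · exact hm x h
          · simp at h; simp [h])
        (by
          intro s h1 h2
          have := hpre s (by omega) h2
          simp only [List.length_append, List.length_singleton]
          push_cast at this ⊢
          omega)
        hne
      obtain ⟨m', h1, h2, h3⟩ := this
      refine ⟨m', h1, ?_, h3⟩
      simp only [List.length_append, List.length_singleton] at h2
      push_cast at h2 ⊢
      omega

end Core


section Matched
variable {M : ℕ}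

/-- every closer carries the type of its matching opener -/
def Matched (ω : ℤ → DyckSym M) : Prop :=
  ∀ i, pat ω i = false →
    ∃ q a, IsMatch (pat ω) i q ∧ ω q = Sum.inl a ∧ ω i = Sum.inr a

lemma lemM (ω : ℤ → DyckSym M) (hmatch : Matched ω) :
    ∀ len : ℕ, ∀ j k : ℤ, j ≤ k + 1 → (k + 1 - j).toNat = len →
    (∀ s, j ≤ s → s ≤ k+1 → htP (pat ω) j ≤ htP (pat ω) s) →
    ∀ l, ∃ pl, (∀ x ∈ pl, x.isLeft = true) ∧
      ((pl.length : ℤ) = htP (pat ω) (k+1) - htP (pat ω) j) ∧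
      F M (some l) (dyckSubword M ω j k) = some (l ++ pl) := by
  intro len
  induction len using Nat.strong_induction_on with
  | _ len IH =>
  intro j k hjk hlen hpre l
  rcases Nat.eq_zero_or_pos len with h0 | hpos
  · have hj : j = k + 1 := by omega
    rw [subword_empty ω (by omega)]
    exact ⟨[], by simp, by rw [hj]; simp, by simp⟩
  have hjk' : j ≤ k := by omega
  have hx : pat ω j = true := by
    rcases hx : pat ω j with _ | _
    · have h1 := htP_succ_false hx
      have := hpre (j+1) (by omega) (by omega)
      omega
    · rfl
  obtain ⟨a, ha⟩ := pat_true hx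
  have hrise : htP (pat ω) (j+1) = htP (pat ω) j + 1 := htP_succ_true hx
  by_cases hex : ∃ z, (j < z ∧ z ≤ k) ∧ htP (pat ω) (z+1) = htP (pat ω) j
  · -- there is a return to base level: decompose
    obtain ⟨i₀, ⟨⟨hji₀, hik⟩, hret⟩, hleast⟩ := Int.exists_least_of_bdd
      (P := fun z => (j < z ∧ z ≤ k) ∧ htP (pat ω) (z+1) = htP (pat ω) j)
      ⟨j+1, fun z hz => by omega⟩ hex
    have hz_inner : ∀ z, j < z → z < i₀ → htP (pat ω) (z+1) ≠ htP (pat ω) j := by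
      intro z h1 h2 hc
      have := hleast z ⟨⟨h1, by omega⟩, hc⟩
      omega
    have strict_inner := strict_above hx hz_inner
    have hclose : pat ω i₀ = false := by
      rcases hc : pat ω i₀ with _ | _
      · rfl
      · have := htP_succ_true hc
        have := strict_inner i₀ hji₀ le_rfl
        omega
    have hi₀ht : htP (pat ω) i₀ = htP (pat ω) j + 1 := by
      have := htP_succ_false hclose
      omega
    obtain ⟨q, a', hqm, hq, hi₀⟩ := hmatch i₀ hclose
    have hqj : q = j := hqm.unique (least_return_match hx hji₀ hret hz_inner)
    rw [hqj, ha] at hq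
    have haa : a = a' := by exact (Sum.inl.injEq _ _).mp hq
    subst haa
    -- split the word
    have hsplit : dyckSubword M ω j k = dyckSubword M ω j i₀ ++ dyckSubword M ω (i₀+1) k := by
      have h := subword_append ω (m := i₀ + 1) (j := j) (k := k) (by omega) (by omega)
      rw [show i₀ + 1 - 1 = i₀ by ring] at h
      exact h
    have hsplit1 : dyckSubword M ω j i₀ = ω j :: dyckSubword M ω (j+1) (i₀-1) ++ [ω i₀] := by
      rw [subword_append ω (m := i₀) (j := j) (k := i₀) (by omega) (by omega),
        subword_cons ω (by omega), subword_single]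
    -- inner part
    obtain ⟨pl₁, hpl₁left, hpl₁len, hpl₁⟩ := IH ((i₀ - 1) + 1 - (j+1)).toNat (by omega)
      (j+1) (i₀-1) (by omega) rfl
      (by
        intro s h1 h2
        have := strict_inner s (by omega) (by omega)
        omega)
      (l ++ [Sum.inl a])
    have hpl₁nil : pl₁ = [] := by
      have : (pl₁.length : ℤ) = 0 := by
        rw [hpl₁len, show i₀ - 1 + 1 = i₀ by ring]
        omega
      have : pl₁.length = 0 := by omega
      exact List.length_eq_zero_iff.mp this
    subst hpl₁nil
    rw [List.append_nil] at hpl₁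
    -- tail part
    obtain ⟨pl₂, hpl₂left, hpl₂len, hpl₂⟩ := IH (k + 1 - (i₀+1)).toNat (by omega)
      (i₀+1) k (by omega) rfl
      (by
        intro s h1 h2
        have := hpre s (by omega) h2
        have h1' := htP_succ_false hclose
        omega)
      l
    refine ⟨pl₂, hpl₂left, ?_, ?_⟩
    · rw [hpl₂len]
      have := htP_succ_false hclose
      omega
    · rw [hsplit, hsplit1, F_append]
      rw [show ((ω j :: dyckSubword M ω (j+1) (i₀-1) ++ [ω i₀]) : List (DyckSym M))
          = ω j :: (dyckSubword M ω (j+1) (i₀-1) ++ [ω i₀]) by simp]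
      rw [F_cons, ha, step_inl, F_append, hpl₁]
      rw [show F M (some (l ++ [Sum.inl a])) [ω i₀] = dyckRedStep M (some (l ++ [Sum.inl a])) (ω i₀) from rfl]
      rw [hi₀, step_inr_concat_inl, if_pos rfl]
      exact hpl₂
  · -- no return: entire window stays strictly above
    push_neg at hex
    have hz : ∀ z, j < z → z < k + 1 → htP (pat ω) (z+1) ≠ htP (pat ω) j := by
      intro z h1 h2
      exact hex z ⟨h1, by omega⟩
    have strict := strict_above hx hz
    obtain ⟨pl', hleft, hlen', hF⟩ := IH (k + 1 - (j+1)).toNat (by omega) (j+1) k (by omega) rfl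
      (by
        intro s h1 h2
        rcases eq_or_lt_of_le h1 with rfl | h
        · omega
        · have := strict s (by omega) h2
          omega)
      (l ++ [Sum.inl a])
    refine ⟨Sum.inl a :: pl', ?_, ?_, ?_⟩
    · intro x hxm
      rcases List.mem_cons.mp hxm with rfl | h
      · rfl
      · exact hleft x h
    · simp only [List.length_cons]
      push_cast
      omega
    · rw [subword_cons ω hjk', F_cons, ha, step_inl, hF]
      simp

/-- Matched periodic-positive sequences belong to the Dyck shift -/
lemma matched_mem (ω : ℤ → DyckSym M) (hmatch : Matched ω) : ω ∈ dyckShiftSet M := by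
  have key : ∀ len : ℕ, ∀ j k : ℤ, (k + 1 - j).toNat = len →
      F M (some []) (dyckSubword M ω j k) ≠ none := by
    intro len
    induction len using Nat.strong_induction_on with
    | _ len IH =>
    intro j k hlen
    rcases le_or_gt j k with hjk | hjk
    swap
    · rw [subword_empty ω hjk]; simp [F]
    rcases hx : pat ω j with _ | _
    · -- closer first: strip it
      obtain ⟨b, hb⟩ := pat_false hx
      rw [subword_cons ω hjk, F_cons, hb, step_inr_nil,
        show ([Sum.inr b] : List (DyckSym M)) = Sum.inr b :: [] from rfl,
        bottom_closer_inert]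
      intro hc
      exact IH (k + 1 - (j+1)).toNat (by omega) (j+1) k rfl (Option.map_eq_none_iff.mp hc)
    · obtain ⟨a, ha⟩ := pat_true hx
      by_cases hex : ∃ z, (j < z ∧ z ≤ k) ∧ htP (pat ω) (z+1) = htP (pat ω) j
      · -- decompose at the least return; head part reduces to [] by lemM
        obtain ⟨i₀, ⟨⟨hji₀, hik⟩, hret⟩, hleast⟩ := Int.exists_least_of_bdd
          (P := fun z => (j < z ∧ z ≤ k) ∧ htP (pat ω) (z+1) = htP (pat ω) j)
          ⟨j+1, fun z hz => by omega⟩ hex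
        have hz_inner : ∀ z, j < z → z < i₀ → htP (pat ω) (z+1) ≠ htP (pat ω) j := by
          intro z h1 h2 hc
          have := hleast z ⟨⟨h1, by omega⟩, hc⟩
          omega
        have strict_inner := strict_above hx hz_inner
        obtain ⟨pl, hplleft, hpllen, hpl⟩ := lemM ω hmatch (i₀ + 1 - j).toNat j i₀ (by omega) rfl
          (by
            intro s h1 h2
            rcases eq_or_lt_of_le h1 with rfl | hlt
            · omega
            · rcases eq_or_lt_of_le h2 with rfl | hlt2
              · omega
              · have := strict_inner s hlt (by omega)
                omega)
          []
        have hplnil : pl = [] := by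
          have : (pl.length : ℤ) = 0 := by omega
          exact List.length_eq_zero_iff.mp (by omega)
        subst hplnil
        rw [subword_append ω (show j ≤ i₀ + 1 by omega) (by omega), F_append,
          show i₀ + 1 - 1 = i₀ by ring, hpl]
        simpa using IH (k + 1 - (i₀+1)).toNat (by omega) (i₀+1) k rfl
      · push_neg at hex
        have hz : ∀ z, j < z → z < k + 1 → htP (pat ω) (z+1) ≠ htP (pat ω) j := by
          intro z h1 h2
          exact hex z ⟨h1, by omega⟩
        have strict := strict_above hx hz
        obtain ⟨pl, _, _, hpl⟩ := lemM ω hmatch len j k (by omega) hlen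
          (by
            intro s h1 h2
            rcases eq_or_lt_of_le h1 with rfl | hlt
            · omega
            · have := strict s hlt h2
              omega)
          []
        rw [hpl]
        simp
  intro j k _
  exact key (k + 1 - j).toNat j k rfl

end Matched


section Forcing
variable {M : ℕ}

lemma match_strict {P : ℤ → Bool} {i q : ℤ} (h : IsMatch P i q) (hi : P i = false) :
    ∀ s, q < s → s ≤ i → htP P q < htP P s := by
  have hiht : htP P i = htP P q + 1 := by
    have := htP_succ_false hi
    have := h.2.1
    omega
  by_contra hcon
  push_neg at hcon
  obtain ⟨s, ⟨hqs, hsi, hle⟩, hleast⟩ := Int.exists_least_of_bdd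
    (P := fun s => q < s ∧ s ≤ i ∧ htP P s ≤ htP P q)
    ⟨q + 1, fun z hz => by omega⟩
    (by obtain ⟨s, h1, h2, h3⟩ := hcon; exact ⟨s, h1, h2, h3⟩)
  rcases eq_or_lt_of_le hle with heq | hlt
  · -- htP s = htP q : contradicts maximality in IsMatch
    have hsi' : s < i := by
      rcases eq_or_lt_of_le hsi with rfl | h'
      · omega
      · exact h'
    have := h.2.2 s hsi' (by rw [heq, h.2.1])
    omega
  · -- htP s < htP q : only possible for s = q+1; find crossing back up
    have hs_eq : s = q + 1 := by
      by_contra hne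
      have hprev : ¬ (q < s - 1 ∧ s - 1 ≤ i ∧ htP P (s-1) ≤ htP P q) := by
        intro hc
        have := hleast _ hc
        omega
      have hs1 : htP P q < htP P (s-1) := by
        by_contra hcc
        exact hprev ⟨by omega, by omega, by omega⟩
      have hstep := htP_step P (s-1)
      rw [show s - 1 + 1 = s by ring] at hstep
      omega
    subst hs_eq
    have hqi1 : q + 1 < i := by
      rcases eq_or_lt_of_le hsi with heq | h'
      · rw [heq] at hlt; omega
      · exact h'
    obtain ⟨z, ⟨hz1, hz2, hz3⟩, hzleast⟩ := Int.exists_least_of_bdd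
      (P := fun z => q + 1 < z ∧ z ≤ i ∧ htP P q ≤ htP P z)
      ⟨q + 2, fun z hz => by omega⟩
      ⟨i, hqi1, le_rfl, by omega⟩
    have hzprev : htP P (z - 1) < htP P q := by
      rcases eq_or_lt_of_le (show q + 1 ≤ z - 1 by omega) with heq | h'
      · rw [← heq]; omega
      · by_contra hcc
        have := hzleast (z-1) ⟨h', by omega, by omega⟩
        omega
    have hstep := htP_step P (z-1)
    rw [show z - 1 + 1 = z by ring] at hstep
    have hz_eq : htP P z = htP P q := by omega
    have hzi : z < i := by
      rcases eq_or_lt_of_le hz2 with rfl | h'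
      · omega
      · exact h'
    have := h.2.2 z hzi (by rw [hz_eq, h.2.1])
    omega

lemma match_opener {P : ℤ → Bool} {i q : ℤ} (h : IsMatch P i q) (hi : P i = false) :
    P q = true := by
  have h1 := match_strict h hi (q+1) (by omega) (by have := h.1; omega)
  rcases hc : P q with _ | _
  · have := htP_succ_false hc
    omega
  · rfl

/-- iterates of the shift map -/
lemma iterate_shift (ω : ℤ → DyckSym M) (n : ℕ) (i : ℤ) :
    ((dyckShiftMap M)^[n] ω) i = ω (i + n) := by
  induction n generalizing ω with
  | zero => simp
  | succ n ih =>
    rw [Function.iterate_succ_apply, ih (dyckShiftMap M ω)]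
    show ω (i + n + 1) = _
    congr 1
    push_cast
    ring

lemma per_all {ω : ℤ → DyckSym M} {n : ℕ} (h : (dyckShiftMap M)^[n] ω = ω) :
    ∀ i : ℤ, ω (i + n) = ω i := by
  intro i
  conv_rhs => rw [← h]
  rw [iterate_shift]

lemma per_mult {ω : ℤ → DyckSym M} {n : ℕ} (h : (dyckShiftMap M)^[n] ω = ω) :
    ∀ (i k : ℤ), ω (i + k * n) = ω i := by
  intro i k
  induction k using Int.induction_on with
  | zero => simp
  | succ m ih =>
    rw [show i + ((m:ℤ)+1) * n = (i + m * n) + n by ring, per_all h, ih]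
  | pred m ih =>
    have h2 := per_all h (i + (-(m:ℤ)-1) * n)
    rw [show i + (-(m:ℤ)-1) * n + n = i + (-(m:ℤ)) * n by ring] at h2
    rw [← h2]
    exact ih

lemma dyckH_eq_htP (n : ℕ) (ω : ℤ → DyckSym M) : dyckH M n ω = htP (pat ω) n := by
  have h := htP_sub (pat ω) (show (0:ℤ) ≤ (n:ℤ) by omega)
  rw [htP_zero, sub_zero] at h
  rw [h]
  clear h
  unfold dyckH
  induction n with
  | zero => simp
  | succ n ih =>
    have e1 : (∑ t ∈ Finset.Ico (0:ℤ) ((n:ℤ)+1), sg (pat ω t))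
        = (∑ t ∈ Finset.Ico (0:ℤ) (n:ℤ), sg (pat ω t)) + sg (pat ω n) := by
      rw [← sum_Ico_split (fun t => sg (pat ω t)) (show (0:ℤ) ≤ (n:ℤ) by omega)
        (show (n:ℤ) ≤ (n:ℤ)+1 by omega), sum_Ico_single]
    rw [Finset.sum_range_succ, show ((n+1:ℕ):ℤ) = (n:ℤ)+1 by push_cast; ring, e1, ← ih]
    rfl

end Forcing


section ForceMatch
variable {M : ℕ}

/-- In a member of the Dyck shift with periodic pattern and positive drift,
every closer carries the type of its matching opener. -/
lemma shift_matched {n : ℕ} (hn : 0 < n) (ω : ℤ → DyckSym M) (hω : ω ∈ dyckShiftSet M)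
    (hper : ∀ i : ℤ, ω (i + n) = ω i) (hd : 0 < htP (pat ω) n) : Matched ω := by
  intro i hi
  have hPper : ∀ z : ℤ, pat ω (z + n) = pat ω z := fun z => by unfold pat; rw [hper z]
  obtain ⟨q, hq⟩ := exists_match hPper hn hd hi
  have hql : pat ω q = true := match_opener hq hi
  obtain ⟨a, ha⟩ := pat_true hql
  obtain ⟨b, hb⟩ := pat_false hi
  have hstrict := match_strict hq hi
  have hrise : htP (pat ω) (q+1) = htP (pat ω) q + 1 := htP_succ_true hql
  have hiht : htP (pat ω) i = htP (pat ω) q + 1 := by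
    have := htP_succ_false hi
    have := hq.2.1
    omega
  have hqi : q < i := hq.1
  -- decompose the window [q,i]
  have hsplit : dyckSubword M ω q i
      = ω q :: dyckSubword M ω (q+1) (i-1) ++ [ω i] := by
    rw [subword_append ω (m := i) (j := q) (k := i) (by omega) (by omega),
      subword_cons ω (by omega), subword_single]
  have hred := hω q i hqi
  unfold dyckRed at hred
  rw [hsplit] at hred
  rw [show ((ω q :: dyckSubword M ω (q+1) (i-1) ++ [ω i]) : List (DyckSym M))
      = ω q :: (dyckSubword M ω (q+1) (i-1) ++ [ω i]) by simp] at hred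
  have hredF : F M (some []) (ω q :: (dyckSubword M ω (q+1) (i-1) ++ [ω i])) ≠ none := hred
  rw [F_cons, ha, step_inl, F_append] at hredF
  simp only [List.nil_append] at hredF
  -- inner part via lemK
  have hinner : F M (some ([Sum.inl a] ++ [])) (dyckSubword M ω (q+1) (i-1)) ≠ none := by
    rw [List.append_nil]
    intro hc
    rw [hc] at hredF
    exact hredF (F_none _)
  obtain ⟨m', hm'left, hm'len, hm'⟩ := lemK ω ((i-1) + 1 - (q+1)).toNat (q+1) (i-1) (by omega) rfl
    [Sum.inl a] [] (by simp)
    (by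
      intro s h1 h2
      have := hstrict s (by omega) (by omega)
      simp only [List.length_nil]
      omega)
    hinner
  have hm'nil : m' = [] := by
    apply List.length_eq_zero_iff.mp
    have : (m'.length : ℤ) = 0 := by
      rw [hm'len]
      simp only [List.length_nil]
      rw [show i - 1 + 1 = i by ring]
      omega
    omega
  subst hm'nil
  simp only [List.append_nil] at hm'
  rw [hm'] at hredF
  rw [show F M (some [Sum.inl a]) [ω i] = dyckRedStep M (some [Sum.inl a]) (ω i) from rfl, hb,
    show ([Sum.inl a] : List (DyckSym M)) = [] ++ [Sum.inl a] by simp, step_inr_concat_inl] at hredF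
  by_cases hab : a = b
  · exact ⟨q, a, hq, ha, by rw [hb, hab]⟩
  · rw [if_neg hab] at hredF
    exact absurd rfl hredF

end ForceMatch


section Construction
variable {M n : ℕ}

def idx (n : ℕ) (hn : 0 < n) (i : ℤ) : Fin n :=
  ⟨(i % (n:ℤ)).toNat, by
    have hne : (n:ℤ) ≠ 0 := by omega
    have h1 : 0 ≤ i % (n:ℤ) := Int.emod_nonneg i hne
    have h2 : i % (n:ℤ) < n := Int.emod_lt_of_pos i (by omega)
    omega⟩

lemma idx_add (hn : 0 < n) (i : ℤ) : idx n hn (i + n) = idx n hn i := by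
  unfold idx
  congr 1
  rw [show i + (n:ℤ) = i + (n:ℤ) * 1 by ring, Int.add_mul_emod_self_left]

lemma idx_coe (hn : 0 < n) (j : ℕ) (hj : j < n) : idx n hn (j:ℤ) = ⟨j, hj⟩ := by
  unfold idx
  congr 1
  rw [Int.emod_eq_of_lt (by omega) (by omega)]
  simp

lemma idx_coe_fin (hn : 0 < n) (t : Fin n) : idx n hn ((t:ℕ):ℤ) = t := by
  rw [idx_coe hn t t.is_lt]

lemma coe_idx (hn : 0 < n) (i : ℤ) : ((idx n hn i : ℕ) : ℤ) = i % (n:ℤ) := by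
  unfold idx
  simp only []
  have hne : (n:ℤ) ≠ 0 := by omega
  have h1 : 0 ≤ i % (n:ℤ) := Int.emod_nonneg i hne
  omega

def patV (hn : 0 < n) (v : Fin n → Option (Fin M)) : ℤ → Bool :=
  fun i => (v (idx n hn i)).isSome

lemma patV_periodic (hn : 0 < n) (v : Fin n → Option (Fin M)) :
    ∀ i : ℤ, patV hn v (i + n) = patV hn v i := by
  intro i; unfold patV; rw [idx_add]

noncomputable def typeAt (hM : 0 < M) (hn : 0 < n) (v : Fin n → Option (Fin M)) (q : ℤ) : Fin M :=
  (v (idx n hn q)).getD ⟨0, hM⟩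

noncomputable def matchF (P : ℤ → Bool) (i : ℤ) : ℤ :=
  @dite _ (∃ q, IsMatch P i q) (Classical.dec _) (fun h => h.choose) (fun _ => 0)

lemma matchF_spec {P : ℤ → Bool} {i : ℤ} (h : ∃ q, IsMatch P i q) :
    IsMatch P i (matchF P i) := by
  unfold matchF
  rw [dif_pos h]
  exact h.choose_spec

noncomputable def omegaV (hM : 0 < M) (hn : 0 < n) (v : Fin n → Option (Fin M)) :
    ℤ → DyckSym M :=
  fun i => match v (idx n hn i) with
  | some a => Sum.inl a
  | none => Sum.inr (typeAt hM hn v (matchF (patV hn v) i))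

lemma pat_omegaV (hM : 0 < M) (hn : 0 < n) (v : Fin n → Option (Fin M)) :
    pat (omegaV hM hn v) = patV hn v := by
  funext i
  unfold pat omegaV patV
  cases hv : v (idx n hn i) <;> simp [hv]

lemma omegaV_opener (hM : 0 < M) (hn : 0 < n) (v : Fin n → Option (Fin M)) {q : ℤ} {a : Fin M}
    (hv : v (idx n hn q) = some a) : omegaV hM hn v q = Sum.inl a := by
  unfold omegaV; rw [hv]

lemma omegaV_closer (hM : 0 < M) (hn : 0 < n) (v : Fin n → Option (Fin M)) {i : ℤ}
    (hv : v (idx n hn i) = none) :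
    omegaV hM hn v i = Sum.inr (typeAt hM hn v (matchF (patV hn v) i)) := by
  unfold omegaV; rw [hv]

lemma matched_omegaV (hM : 0 < M) (hn : 0 < n) (v : Fin n → Option (Fin M))
    (hd : 0 < htP (patV hn v) n) : Matched (omegaV hM hn v) := by
  intro i hi
  rw [pat_omegaV] at hi ⊢
  have hvi : v (idx n hn i) = none := by
    unfold patV at hi
    exact Option.not_isSome_iff_eq_none.mp (by rw [hi]; simp)
  have hex : ∃ q, IsMatch (patV hn v) i q :=
    exists_match (patV_periodic hn v) hn hd hi
  have hq := matchF_spec hex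
  have hopen : patV hn v (matchF (patV hn v) i) = true := match_opener hq hi
  obtain ⟨a, ha⟩ : ∃ a, v (idx n hn (matchF (patV hn v) i)) = some a :=
    Option.isSome_iff_exists.mp (show (v (idx n hn (matchF (patV hn v) i))).isSome = true from hopen)
  refine ⟨matchF (patV hn v) i, a, hq, omegaV_opener hM hn v ha, ?_⟩
  rw [omegaV_closer hM hn v hvi]
  congr 1
  unfold typeAt
  rw [ha]
  rfl

lemma omegaV_per (hM : 0 < M) (hn : 0 < n) (v : Fin n → Option (Fin M))
    (hd : 0 < htP (patV hn v) n) :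
    ∀ i : ℤ, omegaV hM hn v (i + n) = omegaV hM hn v i := by
  intro i
  unfold omegaV
  rw [idx_add]
  cases hv : v (idx n hn i) with
  | some a => rfl
  | none =>
    simp only []
    congr 1
    -- matchF shifts by n
    have hi : patV hn v i = false := by unfold patV; rw [hv]; rfl
    have hin : patV hn v (i + n) = false := by rw [patV_periodic hn v]; exact hi
    have hex : ∃ q, IsMatch (patV hn v) i q :=
      exists_match (patV_periodic hn v) hn hd hi
    have hexn : ∃ q, IsMatch (patV hn v) (i+n) q :=
      exists_match (patV_periodic hn v) hn hd hin
    have h1 : IsMatch (patV hn v) (i+n) (matchF (patV hn v) i + n) :=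
      (matchF_spec hex).shift (patV_periodic hn v)
    have h2 := (matchF_spec hexn).unique h1
    rw [h2]
    unfold typeAt
    rw [idx_add]

lemma omegaV_iterate (hM : 0 < M) (hn : 0 < n) (v : Fin n → Option (Fin M))
    (hd : 0 < htP (patV hn v) n) :
    (dyckShiftMap M)^[n] (omegaV hM hn v) = omegaV hM hn v := by
  funext i
  rw [iterate_shift]
  exact omegaV_per hM hn v hd i

/-- sum of ±1 over Fin n -/
lemma sum_pm (n : ℕ) (c : Fin n → Bool) :
    (∑ t : Fin n, if c t then (1:ℤ) else -1)
      = 2 * ((Finset.univ.filter fun t => c t = true).card : ℤ) - n := by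
  rw [Finset.sum_ite, Finset.sum_const, Finset.sum_const, nsmul_eq_mul, nsmul_eq_mul,
    mul_one, mul_neg_one]
  have hcard := Finset.card_filter_add_card_filter_not (s := (Finset.univ : Finset (Fin n)))
    (fun t => c t = true)
  simp only [Finset.card_univ, Fintype.card_fin] at hcard
  push_cast
  omega

lemma dyckH_omegaV (hM : 0 < M) (hn : 0 < n) (v : Fin n → Option (Fin M)) :
    dyckH M n (omegaV hM hn v)
      = 2 * ((Finset.univ.filter fun t => (v t).isSome = true).card : ℤ) - n := by
  unfold dyckH
  rw [← Fin.sum_univ_eq_sum_range (fun j => if (omegaV hM hn v (j:ℤ)).isLeft then (1:ℤ) else -1) n]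
  rw [← sum_pm n (fun t => (v t).isSome)]
  apply Finset.sum_congr rfl
  intro t _
  congr 1
  have : (omegaV hM hn v ((t:ℕ):ℤ)).isLeft = (v t).isSome := by
    have := congrFun (pat_omegaV hM hn v) ((t:ℕ):ℤ)
    unfold pat patV at this
    rw [idx_coe_fin hn t] at this
    exact this
  rw [this]

end Construction


section Inject
variable {M n : ℕ}

lemma omegaV_inj (hM : 0 < M) (hn : 0 < n) {v v' : Fin n → Option (Fin M)}
    (h : omegaV hM hn v = omegaV hM hn v') : v = v' := by
  funext t
  have ht := congrFun h ((t:ℕ):ℤ)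
  cases hv : v t with
  | some a =>
    have h1 : omegaV hM hn v ((t:ℕ):ℤ) = Sum.inl a :=
      omegaV_opener hM hn v (by rw [idx_coe_fin hn t]; exact hv)
    cases hv' : v' t with
    | some a' =>
      have h2 : omegaV hM hn v' ((t:ℕ):ℤ) = Sum.inl a' :=
        omegaV_opener hM hn v' (by rw [idx_coe_fin hn t]; exact hv')
      rw [h1, h2] at ht
      rw [Sum.inl.injEq] at ht
      rw [ht]
    | none =>
      have h2 : omegaV hM hn v' ((t:ℕ):ℤ) = Sum.inr _ :=
        omegaV_closer hM hn v' (by rw [idx_coe_fin hn t]; exact hv')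
      rw [h1, h2] at ht
      exact absurd ht (by simp)
  | none =>
    cases hv' : v' t with
    | some a' =>
      have h1 : omegaV hM hn v ((t:ℕ):ℤ) = Sum.inr _ :=
        omegaV_closer hM hn v (by rw [idx_coe_fin hn t]; exact hv)
      have h2 : omegaV hM hn v' ((t:ℕ):ℤ) = Sum.inl a' :=
        omegaV_opener hM hn v' (by rw [idx_coe_fin hn t]; exact hv')
      rw [h1, h2] at ht
      exact absurd ht (by simp)
    | none => rfl

/-- forget the types of closers, keep one period -/
def forgetO (n : ℕ) (ω : ℤ → DyckSym M) : Fin n → Option (Fin M) :=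
  fun t => Sum.elim (fun a => some a) (fun _ => none) (ω ((t:ℕ):ℤ))

lemma per_reduce {ω : ℤ → DyckSym M} (h : (dyckShiftMap M)^[n] ω = ω) (hn : 0 < n) (i : ℤ) :
    ω i = ω (((idx n hn i : ℕ)):ℤ) := by
  rw [coe_idx hn i]
  have e : i % (n:ℤ) + (i / n) * n = i := by
    rw [mul_comm]; exact Int.emod_add_mul_ediv i n
  conv_lhs => rw [← e]
  exact per_mult h (i % (n:ℤ)) (i / n)

lemma perA_matched {ω : ℤ → DyckSym M} (hω : ω ∈ dyckPerA M n) (hn : 0 < n) : Matched ω := by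
  apply shift_matched hn ω hω.1.1 (per_all hω.1.2)
  have := hω.2
  rw [dyckH_eq_htP] at this
  exact this

lemma forgetO_injOn (hn : 0 < n) :
    Set.InjOn (forgetO n) (dyckPerA M n) := by
  intro ω hω ω' hω' hf
  have hm := perA_matched hω hn
  have hm' := perA_matched hω' hn
  -- patterns agree
  have hpat : pat ω = pat ω' := by
    funext i
    have h1 := per_reduce hω.1.2 hn i
    have h2 := per_reduce hω'.1.2 hn i
    have h3 := congrFun hf (idx n hn i)
    unfold forgetO at h3
    unfold pat
    rw [h1, h2]
    rcases hx : ω ((((idx n hn i) : ℕ)):ℤ) with a | b <;>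
      rcases hx' : ω' ((((idx n hn i) : ℕ)):ℤ) with a' | b' <;>
      rw [hx, hx'] at h3 <;> simp_all
  -- openers agree
  have hopen_eq : ∀ i, pat ω i = true → ω i = ω' i := by
    intro i hp
    have h1 := per_reduce hω.1.2 hn i
    have h2 := per_reduce hω'.1.2 hn i
    have h3 := congrFun hf (idx n hn i)
    unfold forgetO at h3
    rw [h1, h2]
    have hp' : pat ω (((idx n hn i : ℕ)):ℤ) = true := by
      unfold pat at hp ⊢
      rw [← h1]
      exact hp
    obtain ⟨a, ha⟩ := pat_true hp'
    rw [ha] at h3 ⊢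
    rcases hx' : ω' ((((idx n hn i) : ℕ)):ℤ) with a' | b' <;> rw [hx'] at h3
    · simp only [Sum.elim_inl] at h3
      rw [(Option.some.injEq _ _).mp h3]
    · simp at h3
  funext i
  rcases hp : pat ω i with _ | _
  · -- closer
    obtain ⟨q, a, hq, hqa, hia⟩ := hm i hp
    obtain ⟨q', a', hq', hq'a, hia'⟩ := hm' i (by rw [← hpat]; exact hp)
    rw [← hpat] at hq'
    have hqq : q' = q := hq'.unique hq
    rw [hqq] at hq'a
    have hqopen : pat ω q = true := match_opener hq hp
    have := hopen_eq q hqopen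
    rw [hqa, hq'a] at this
    rw [Sum.inl.injEq] at this
    rw [hia, hia', ← this]
  · exact hopen_eq i hp

lemma perA_finite (hn : 0 < n) : (dyckPerA M n).Finite :=
  Set.Finite.of_finite_image (Set.toFinite _) (forgetO_injOn hn)

/-- the all-closers word is not in the image of a PerA point -/
lemma forgetO_ne_none {ω : ℤ → DyckSym M} (hω : ω ∈ dyckPerA M n) (hn : 0 < n) :
    forgetO n ω ≠ (fun _ => none) := by
  intro hc
  have hneg : ∀ j ∈ Finset.range n, (if (ω (j:ℤ)).isLeft then (1:ℤ) else -1) = -1 := by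
    intro j hj
    have hj' : j < n := Finset.mem_range.mp hj
    have h3 : Sum.elim (fun a => some a) (fun _ : Fin M => (none : Option (Fin M))) (ω ((j:ℕ):ℤ)) = none := by
      have := congrFun hc ⟨j, hj'⟩
      unfold forgetO at this
      simpa using this
    rcases hx : ω ((j:ℕ):ℤ) with a | b
    · rw [hx] at h3; simp at h3
    · simp [hx]
  have : dyckH M n ω = - n := by
    unfold dyckH
    rw [Finset.sum_congr rfl hneg]
    simp
  have := hω.2
  omega

end Inject


section Count
variable (M n : ℕ)

def pc (p : Fin n → Bool) : ℕ := (Finset.univ.filter fun t => p t = true).card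

def patf (v : Fin n → Option (Fin M)) : Fin n → Bool := fun t => (v t).isSome

def goodF : Finset (Fin n → Option (Fin M)) :=
  Finset.univ.filter fun v => n < 2 * pc n (patf M n v)

lemma card_fiber (hM : 0 < M) (p : Fin n → Bool) :
    (Finset.univ.filter fun v : Fin n → Option (Fin M) => patf M n v = p).card
      = M ^ pc n p := by
  have htarget : (Finset.univ : Finset ({t : Fin n // p t = true} → Fin M)).card = M ^ pc n p := by
    rw [Finset.card_univ, Fintype.card_fun, Fintype.card_fin, Fintype.card_subtype]
    rfl
  rw [← htarget]
  refine Finset.card_bij'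
    (fun v _ => fun t : {t : Fin n // p t = true} => (v t.1).getD ⟨0, hM⟩)
    (fun g _ => fun t : Fin n => if h : p t = true then some (g ⟨t, h⟩) else none)
    (fun v _ => Finset.mem_univ _) ?_ ?_ ?_
  · intro g _
    simp only [Finset.mem_filter, Finset.mem_univ, true_and]
    funext t
    unfold patf
    by_cases h : p t = true
    · simp [h]
    · simp [h]
  · intro v hv
    simp only [Finset.mem_filter, Finset.mem_univ, true_and] at hv
    funext t
    by_cases h : p t = true
    · have hsome : (v t).isSome = true := by
        have := congrFun hv t
        unfold patf at this
        rw [this, h]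
      obtain ⟨a, ha⟩ := Option.isSome_iff_exists.mp hsome
      simp [h, ha]
    · have hnone : v t = none := by
        apply Option.not_isSome_iff_eq_none.mp
        have := congrFun hv t
        unfold patf at this
        rw [this]
        simp [h]
      simp [h, hnone]
  · intro g _
    funext t
    simp [t.2]

lemma card_partition (hM : 0 < M) (Q : (Fin n → Bool) → Prop) [DecidablePred Q] :
    (Finset.univ.filter fun v : Fin n → Option (Fin M) => Q (patf M n v)).card
      = ∑ p ∈ Finset.univ.filter Q, M ^ pc n p := by
  rw [Finset.card_eq_sum_card_fiberwise (f := patf M n)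
    (t := Finset.univ.filter Q)
    (by intro v hv; simp only [Finset.mem_coe, Finset.mem_filter, Finset.mem_univ, true_and] at hv ⊢; exact hv)]
  apply Finset.sum_congr rfl
  intro p hp
  rw [← card_fiber M n hM p]
  congr 1
  ext v
  simp only [Finset.mem_filter, Finset.mem_univ, true_and]
  constructor
  · rintro ⟨_, h2⟩
    exact h2
  · intro h2
    refine ⟨?_, h2⟩
    rw [h2]
    exact (Finset.mem_filter.mp hp).2

lemma pc_not (p : Fin n → Bool) : pc n (fun t => ! p t) = n - pc n p := by
  unfold pc
  have h := Finset.card_filter_add_card_filter_not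
    (s := (Finset.univ : Finset (Fin n))) (fun t => p t = true)
  simp only [Finset.card_univ, Fintype.card_fin] at h
  have e : (Finset.filter (fun t => (! p t) = true) Finset.univ)
      = (Finset.filter (fun t => ¬ (p t = true)) Finset.univ) := by
    ext t
    simp
  rw [e]
  omega

lemma pc_le (p : Fin n → Bool) : pc n p ≤ n := by
  unfold pc
  calc (Finset.univ.filter fun t => p t = true).card ≤ (Finset.univ : Finset (Fin n)).card :=
        Finset.card_filter_le _ _
    _ = n := by simp

lemma B_le_G (hM : 1 ≤ M) :
    (∑ p ∈ Finset.univ.filter (fun p : Fin n → Bool => 2 * pc n p < n), M ^ pc n p)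
      ≤ ∑ p ∈ Finset.univ.filter (fun p : Fin n → Bool => n < 2 * pc n p), M ^ pc n p := by
  calc (∑ p ∈ Finset.univ.filter (fun p : Fin n → Bool => 2 * pc n p < n), M ^ pc n p)
      ≤ ∑ p ∈ Finset.univ.filter (fun p : Fin n → Bool => 2 * pc n p < n), M ^ (n - pc n p) := by
        apply Finset.sum_le_sum
        intro p hp
        simp only [Finset.mem_filter, Finset.mem_univ, true_and] at hp
        exact Nat.pow_le_pow_right hM (by omega)
    _ = ∑ p ∈ Finset.univ.filter (fun p : Fin n → Bool => n < 2 * pc n p), M ^ pc n p := by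
        apply Finset.sum_nbij' (i := fun p => fun t => ! p t) (j := fun p => fun t => ! p t)
        · intro p hp
          simp only [Finset.mem_filter, Finset.mem_univ, true_and] at hp ⊢
          rw [pc_not]
          omega
        · intro p hp
          simp only [Finset.mem_filter, Finset.mem_univ, true_and] at hp ⊢
          rw [pc_not]
          have := pc_le n p
          omega
        · intro p _
          funext t
          simp
        · intro p _
          funext t
          simp
        · intro p hp
          simp only [Finset.mem_filter, Finset.mem_univ, true_and] at hp
          rw [pc_not]

lemma Mi_eq_zero (hodd : ¬ 2 ∣ n) :
    (∑ p ∈ Finset.univ.filter (fun p : Fin n → Bool => 2 * pc n p = n), M ^ pc n p) = 0 := by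
  rw [Finset.filter_false_of_mem, Finset.sum_empty]
  intro p _
  intro hc
  exact hodd ⟨pc n p, by omega⟩

lemma Mi_bound :
    (∑ p ∈ Finset.univ.filter (fun p : Fin n → Bool => 2 * pc n p = n), M ^ pc n p)
      ≤ 2 ^ n * M ^ (n / 2) := by
  calc (∑ p ∈ Finset.univ.filter (fun p : Fin n → Bool => 2 * pc n p = n), M ^ pc n p)
      = ∑ p ∈ Finset.univ.filter (fun p : Fin n → Bool => 2 * pc n p = n), M ^ (n / 2) := by
        apply Finset.sum_congr rfl
        intro p hp
        simp only [Finset.mem_filter, Finset.mem_univ, true_and] at hp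
        congr 1
        omega
    _ = (Finset.univ.filter (fun p : Fin n → Bool => 2 * pc n p = n)).card * M ^ (n / 2) := by
        rw [Finset.sum_const, smul_eq_mul]
    _ ≤ 2 ^ n * M ^ (n / 2) := by
        apply Nat.mul_le_mul_right
        calc (Finset.univ.filter (fun p : Fin n → Bool => 2 * pc n p = n)).card
            ≤ (Finset.univ : Finset (Fin n → Bool)).card := Finset.card_filter_le _ _
          _ = 2 ^ n := by simp

lemma total_count (hM : 0 < M) :
    (M + 1) ^ n = (∑ p ∈ Finset.univ.filter (fun p : Fin n → Bool => n < 2 * pc n p), M ^ pc n p)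
      + (∑ p ∈ Finset.univ.filter (fun p : Fin n → Bool => 2 * pc n p < n), M ^ pc n p)
      + (∑ p ∈ Finset.univ.filter (fun p : Fin n → Bool => 2 * pc n p = n), M ^ pc n p) := by
  have h1 : (M + 1) ^ n = ∑ p ∈ (Finset.univ : Finset (Fin n → Bool)), M ^ pc n p := by
    have h2 := card_partition M n hM (fun _ => True)
    rw [Finset.filter_true_of_mem (fun _ _ => trivial),
      Finset.filter_true_of_mem (fun _ _ => trivial)] at h2
    rw [← h2, Finset.card_univ]
    simp
  have hsplit1 := Finset.sum_filter_add_sum_filter_not (Finset.univ : Finset (Fin n → Bool))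
    (fun p => n < 2 * pc n p) (fun p => M ^ pc n p)
  have hsplit2 := Finset.sum_filter_add_sum_filter_not
    (Finset.filter (fun p : Fin n → Bool => ¬ n < 2 * pc n p) Finset.univ)
    (fun p => 2 * pc n p < n) (fun p => M ^ pc n p)
  have e1 : (Finset.filter (fun p : Fin n → Bool => ¬ n < 2 * pc n p) Finset.univ).filter
      (fun p => 2 * pc n p < n)
      = Finset.filter (fun p : Fin n → Bool => 2 * pc n p < n) Finset.univ := by
    rw [Finset.filter_filter]
    apply Finset.filter_congr
    intro p _
    constructor
    · rintro ⟨_, h⟩; exact h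
    · intro h; exact ⟨by omega, h⟩
  have e2 : (Finset.filter (fun p : Fin n → Bool => ¬ n < 2 * pc n p) Finset.univ).filter
      (fun p => ¬ 2 * pc n p < n)
      = Finset.filter (fun p : Fin n → Bool => 2 * pc n p = n) Finset.univ := by
    rw [Finset.filter_filter]
    apply Finset.filter_congr
    intro p _
    constructor
    · rintro ⟨h1', h2'⟩; omega
    · intro h; constructor <;> omega
  rw [e1, e2] at hsplit2
  omega

lemma goodF_card (hM : 0 < M) :
    (goodF M n).card
      = ∑ p ∈ Finset.univ.filter (fun p : Fin n → Bool => n < 2 * pc n p), M ^ pc n p := by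
  unfold goodF
  exact card_partition M n hM (fun p => n < 2 * pc n p)

end Count


section Final

lemma exists_N0 (M : ℕ) (hM : 2 ≤ M) :
    ∃ N0 : ℕ, ∀ m ≥ N0, (3:ℝ) * (4*(M:ℝ))^m ≤ ((M:ℝ)+1)^(2*m) := by
  have hM4 : (0:ℝ) < 4*(M:ℝ) := by positivity
  have hMR : (2:ℝ) ≤ (M:ℝ) := by exact_mod_cast hM
  have hr : 1 < ((M:ℝ)+1)^2 / (4*(M:ℝ)) := by
    rw [lt_div_iff₀ hM4]
    nlinarith
  obtain ⟨N0, hN0⟩ := Filter.eventually_atTop.mp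
    ((tendsto_pow_atTop_atTop_of_one_lt hr).eventually_ge_atTop (3:ℝ))
  refine ⟨N0, fun m hm => ?_⟩
  have h3 := hN0 m hm
  have hpos : (0:ℝ) < (4*(M:ℝ))^m := by positivity
  rw [div_pow, le_div_iff₀ hpos] at h3
  calc (3:ℝ) * (4*(M:ℝ))^m ≤ (((M:ℝ)+1)^2)^m := h3
    _ = ((M:ℝ)+1)^(2*m) := by rw [← pow_mul]

lemma pc_patf_eq (M n : ℕ) (v : Fin n → Option (Fin M)) :
    pc n (patf M n v) = (Finset.univ.filter fun t => (v t).isSome = true).card := rfl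

theorem main_bounds (M : ℕ) (hM : 2 ≤ M) :
    ∃ N : ℕ, ∀ n ≥ N,
      (1 / 3 : ℝ) * ((M : ℝ) + 1) ^ n ≤ ((dyckPerA M n).ncard : ℝ) ∧
      ((dyckPerA M n).ncard : ℝ) < ((M : ℝ) + 1) ^ n := by
  obtain ⟨N0, hN0⟩ := exists_N0 M hM
  refine ⟨max (2*N0+2) 1, fun n hn => ?_⟩
  have hn1 : 0 < n := by
    have := le_trans (le_max_right (2*N0+2) 1) hn
    omega
  have hMpos : 0 < M := by omega
  have hfin : (dyckPerA M n).Finite := perA_finite hn1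
  -- upper bound
  have hupper_nat : (dyckPerA M n).ncard < (M+1)^n := by
    have himg : (forgetO n '' dyckPerA M n).ncard = (dyckPerA M n).ncard :=
      Set.ncard_image_of_injOn (forgetO_injOn hn1)
    have hsubs : forgetO n '' dyckPerA M n
        ⊆ (Set.univ \ {fun _ => none} : Set (Fin n → Option (Fin M))) := by
      rintro _ ⟨ω, hω, rfl⟩
      exact ⟨trivial, forgetO_ne_none hω hn1⟩
    have hcompl : ((Set.univ \ {fun _ => none} : Set (Fin n → Option (Fin M)))).ncard
        = (M+1)^n - 1 := by
      rw [Set.ncard_diff_singleton_of_mem (Set.mem_univ _), Set.ncard_univ,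
        Nat.card_eq_fintype_card]
      simp
    have h1 : (dyckPerA M n).ncard ≤ (M+1)^n - 1 := by
      rw [← himg, ← hcompl]
      exact Set.ncard_le_ncard hsubs (Set.toFinite _)
    have h2 : 1 ≤ (M+1)^n := Nat.one_le_pow _ _ (by omega)
    omega
  -- lower bound: goodF injects into dyckPerA
  have hlow : (goodF M n).card ≤ (dyckPerA M n).ncard := by
    have hmem : ∀ v ∈ goodF M n, omegaV hMpos hn1 v ∈ dyckPerA M n := by
      intro v hv
      have hgood : n < 2 * pc n (patf M n v) := by
        have := Finset.mem_filter.mp hv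
        exact this.2
    -- positive drift
      have hd0 : 0 < dyckH M n (omegaV hMpos hn1 v) := by
        rw [dyckH_omegaV, ← pc_patf_eq]
        push_cast
        omega
      have hdP : 0 < htP (patV hn1 v) (n:ℤ) := by
        have he := dyckH_eq_htP n (omegaV hMpos hn1 v)
        rw [pat_omegaV] at he
        rw [← he]
        exact hd0
      refine ⟨⟨matched_mem _ (matched_omegaV hMpos hn1 v hdP), omegaV_iterate hMpos hn1 v hdP⟩, hd0⟩
    have hinj : Set.InjOn (omegaV hMpos hn1) (goodF M n : Set (Fin n → Option (Fin M))) :=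
      fun v _ v' _ h => omegaV_inj hMpos hn1 h
    have h1 : (omegaV hMpos hn1 '' (goodF M n : Set (Fin n → Option (Fin M)))).ncard
        = (goodF M n).card := by
      rw [Set.ncard_image_of_injOn hinj, Set.ncard_coe_finset]
    rw [← h1]
    apply Set.ncard_le_ncard _ hfin
    rintro _ ⟨v, hv, rfl⟩
    exact hmem v (by simpa using hv)
  -- counting inequalities
  have hcount := total_count M n hMpos
  have hBG := B_le_G M n (by omega)
  have hgc := goodF_card M n hMpos
  set G := (goodF M n).card with hG
  set Mi := (∑ p ∈ Finset.univ.filter (fun p : Fin n → Bool => 2 * pc n p = n), M ^ pc n p) with hMi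
  have hnle : (M+1)^n ≤ 2 * G + Mi := by
    rw [hgc]
    omega
  -- bound Mi in ℝ
  have hMiR : (Mi : ℝ) ≤ (1/3 : ℝ) * ((M:ℝ)+1)^n := by
    by_cases hpar : 2 ∣ n
    · obtain ⟨m, rfl⟩ := hpar
      have hm : N0 ≤ m := by
        have := le_trans (le_max_left (2*N0+2) 1) hn
        omega
      have h1 : Mi ≤ 2^(2*m) * M^((2*m)/2) := Mi_bound M (2*m)
      rw [show (2*m)/2 = m by omega] at h1
      have h2 : (2:ℕ)^(2*m) * M^m = (4*M)^m := by
        rw [pow_mul, mul_pow]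
        norm_num
      rw [h2] at h1
      have h3 : (Mi:ℝ) ≤ ((4*M)^m : ℕ) := by exact_mod_cast h1
      have h4 : (((4*M)^m : ℕ) : ℝ) = (4*(M:ℝ))^m := by push_cast; ring
      have h5 := hN0 m hm
      rw [h4] at h3
      calc (Mi:ℝ) ≤ (4*(M:ℝ))^m := h3
        _ ≤ (1/3 : ℝ) * ((M:ℝ)+1)^(2*m) := by linarith
    · rw [show Mi = 0 from Mi_eq_zero M n hpar]
      simp only [Nat.cast_zero]
      positivity
  -- cast and conclude
  have hcastpow : (((M+1)^n : ℕ) : ℝ) = ((M:ℝ)+1)^n := by push_cast; ring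
  constructor
  · have hc1 : (((M+1)^n : ℕ) : ℝ) ≤ 2 * (G:ℝ) + (Mi:ℝ) := by exact_mod_cast hnle
    rw [hcastpow] at hc1
    have hc2 : (G : ℝ) ≤ ((dyckPerA M n).ncard : ℝ) := by exact_mod_cast hlow
    linarith
  · have := hupper_nat
    have hc : ((dyckPerA M n).ncard : ℝ) < (((M+1)^n : ℕ) : ℝ) := by exact_mod_cast this
    rw [hcastpow] at hc
    exact hc

end Final

end DyckProof

theorem stmt4 (M : ℕ) (hM : 2 ≤ M) :
    ∃ N : ℕ, ∀ n ≥ N,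
      (1 / 3 : ℝ) * ((M : ℝ) + 1) ^ n ≤ ((dyckPerA M n).ncard : ℝ) ∧
      ((dyckPerA M n).ncard : ℝ) < ((M : ℝ) + 1) ^ n :=
  DyckProof.main_bounds M hM
end
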